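/- arXiv:2605.21848 — 6 statements merged into one kernel-verified Lean document; each statement's English description precedes it below -/
import Mathlib

section
/- For all real numbers a > 0 and b > 0, the integral over (0,1) of log(z) · z^{a/2−1} (1−z)^{b/2−1} with respect to z equals B(a/2, b/2) · (ψ(a/2) − ψ((a+b)/2)). -/
open MeasureTheory

/-- Beta function `B(a,b) = Γ(a)Γ(b)/Γ(a+b)`. -/
noncomputable def betaFn (a b : ℝ) : ℝ :=
  Real.Gamma a * Real.Gamma b / Real.Gamma (a + b)

/-- Digamma function `ψ(x) = d/dx log Γ(x)`. -/
noncomputable def digamma (x : ℝ) : ℝ :=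
  deriv (fun y => Real.log (Real.Gamma y)) x

open Real Metric

lemma realEq {s t : ℝ} {z : ℝ} (hz : z ∈ Set.Ioo (0:ℝ) 1) :
    (z:ℂ) ^ ((s:ℂ) - 1) * (1 - (z:ℂ)) ^ ((t:ℂ) - 1)
      = ((z ^ (s-1) * (1-z) ^ (t-1) : ℝ) : ℂ) := by
  obtain ⟨h0, h1⟩ := hz
  rw [show ((s:ℂ) - 1) = ((s - 1 : ℝ) : ℂ) by push_cast; ring,
    show ((t:ℂ) - 1) = ((t - 1 : ℝ) : ℂ) by push_cast; ring,
    show (1 - (z:ℂ)) = ((1 - z : ℝ) : ℂ) by push_cast; ring,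
    ← Complex.ofReal_cpow h0.le, ← Complex.ofReal_cpow (by linarith), ← Complex.ofReal_mul]

lemma betaInt {s t : ℝ} (hs : 0 < s) (ht : 0 < t) :
    IntegrableOn (fun z : ℝ => z ^ (s-1) * (1-z) ^ (t-1)) (Set.Ioo 0 1) := by
  have hc := Complex.betaIntegral_convergent (u := (s:ℂ)) (v := (t:ℂ)) (by simpa) (by simpa)
  rw [intervalIntegrable_iff_integrableOn_Ioc_of_le zero_le_one] at hc
  have hc2 : IntegrableOn
      (fun x : ℝ => ((x:ℂ) ^ ((s:ℂ) - 1) * (1 - (x:ℂ)) ^ ((t:ℂ) - 1)).re) (Set.Ioo 0 1) :=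
    (hc.mono_set Set.Ioo_subset_Ioc_self).re
  refine hc2.congr_fun (fun z hz => ?_) measurableSet_Ioo
  dsimp only
  rw [realEq hz, Complex.ofReal_re]

lemma betaVal {s t : ℝ} (hs : 0 < s) (ht : 0 < t) :
    ∫ z in Set.Ioo (0:ℝ) 1, z ^ (s-1) * (1-z) ^ (t-1) = betaFn s t := by
  have key := Complex.Gamma_mul_Gamma_eq_betaIntegral
    (s := (s:ℂ)) (t := (t:ℂ)) (by simpa) (by simpa)
  have hΓ : Real.Gamma (s + t) ≠ 0 := (Real.Gamma_pos_of_pos (by linarith)).ne'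
  have hint : Complex.betaIntegral (s:ℂ) (t:ℂ)
      = ((∫ z in Set.Ioo (0:ℝ) 1, z ^ (s-1) * (1-z) ^ (t-1) : ℝ) : ℂ) := by
    rw [Complex.betaIntegral, intervalIntegral.integral_of_le zero_le_one,
      integral_Ioc_eq_integral_Ioo]
    calc ∫ z in Set.Ioo (0:ℝ) 1, (z:ℂ) ^ ((s:ℂ) - 1) * (1 - (z:ℂ)) ^ ((t:ℂ) - 1)
        = ∫ z in Set.Ioo (0:ℝ) 1, ((z ^ (s-1) * (1-z) ^ (t-1) : ℝ) : ℂ) :=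
          setIntegral_congr_fun measurableSet_Ioo fun z hz => realEq hz
      _ = ((∫ z in Set.Ioo (0:ℝ) 1, z ^ (s-1) * (1-z) ^ (t-1) : ℝ) : ℂ) := integral_ofReal
  have : ((Real.Gamma s * Real.Gamma t : ℝ) : ℂ)
      = ((Real.Gamma (s+t) * ∫ z in Set.Ioo (0:ℝ) 1, z ^ (s-1) * (1-z) ^ (t-1) : ℝ) : ℂ) := by
    push_cast [Complex.Gamma_ofReal] at key ⊢
    rw [key, hint, show ((s:ℂ) + (t:ℂ)) = ((s + t : ℝ) : ℂ) by push_cast; ring,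
      Complex.Gamma_ofReal]
  have h2 := Complex.ofReal_injective this
  rw [betaFn, eq_div_iff hΓ]
  linarith [h2]

lemma logBound {z : ℝ} (h0 : 0 < z) (h1 : z ≤ 1) {δ : ℝ} (hδ : 0 < δ) :
    |Real.log z| ≤ δ⁻¹ * z ^ (-δ) := by
  have hlz : Real.log z ≤ 0 := Real.log_nonpos h0.le h1
  rw [abs_of_nonpos hlz, ← Real.log_inv]
  have hinv : (1:ℝ) ≤ z⁻¹ := (one_le_inv_iff₀).2 ⟨h0, h1⟩
  have h3 : Real.log (z⁻¹ ^ δ) ≤ z⁻¹ ^ δ - 1 :=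
    Real.log_le_sub_one_of_pos (Real.rpow_pos_of_pos (by positivity) δ)
  rw [Real.log_rpow (by positivity)] at h3
  have h4 : z⁻¹ ^ δ = z ^ (-δ) := by
    rw [Real.inv_rpow h0.le, ← Real.rpow_neg h0.le]
  rw [h4] at h3
  have h5 := mul_le_mul_of_nonneg_left h3 (inv_pos.2 hδ).le
  have h6 : δ⁻¹ * (δ * Real.log z⁻¹) = Real.log z⁻¹ := by
    field_simp
  nlinarith [inv_pos.2 hδ]
lemma betaLogInt {s t : ℝ} (hs : 0 < s) (ht : 0 < t) :
    IntegrableOn (fun z : ℝ => |Real.log z| * z ^ (s-1) * (1-z) ^ (t-1)) (Set.Ioo 0 1) := by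
  have hs2 : 0 < s/2 := by linarith
  have hbd := (betaInt hs2 ht).const_mul ((s/2)⁻¹)
  refine Integrable.mono' hbd ?_ ?_
  · apply Measurable.aestronglyMeasurable
    have m1 : Measurable fun z : ℝ => z ^ (s-1) := by measurability
    have m2 : Measurable fun z : ℝ => z ^ (t-1) := by measurability
    exact (Real.measurable_log.abs.mul m1).mul (m2.comp (measurable_const.sub measurable_id))
  · filter_upwards [ae_restrict_mem measurableSet_Ioo] with z hz
    obtain ⟨h0, h1⟩ := hz
    have hz1 : (0:ℝ) < 1 - z := by linarith
    have hA : (0:ℝ) ≤ |Real.log z| * z ^ (s-1) * (1-z) ^ (t-1) := by positivity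
    rw [Real.norm_eq_abs, abs_of_nonneg hA]
    have hlb := logBound h0 h1.le hs2
    have : |Real.log z| * z ^ (s-1) ≤ (s/2)⁻¹ * z ^ (s/2-1) := by
      calc |Real.log z| * z ^ (s-1) ≤ ((s/2)⁻¹ * z ^ (-(s/2))) * z ^ (s-1) := by
            exact mul_le_mul_of_nonneg_right hlb (Real.rpow_nonneg h0.le _)
        _ = (s/2)⁻¹ * z ^ (s/2-1) := by
            rw [mul_assoc, ← Real.rpow_add h0]; ring_nf
    calc |Real.log z| * z ^ (s-1) * (1-z) ^ (t-1)
        ≤ ((s/2)⁻¹ * z ^ (s/2-1)) * (1-z) ^ (t-1) :=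
          mul_le_mul_of_nonneg_right this (Real.rpow_nonneg hz1.le _)
      _ = (s/2)⁻¹ * (z ^ (s/2-1) * (1-z) ^ (t-1)) := by ring

lemma hasDerivAt_rpow_exp {z : ℝ} (hz : 0 < z) (x : ℝ) :
    HasDerivAt (fun p : ℝ => z ^ (p-1)) (Real.log z * z ^ (x-1)) x := by
  have h1 : HasDerivAt (fun p : ℝ => (p-1) * Real.log z) (Real.log z) x := by
    simpa using ((hasDerivAt_id x).sub_const 1).mul_const (Real.log z)
  have h2 := h1.exp
  have hre : ∀ p : ℝ, Real.exp ((p-1) * Real.log z) = z ^ (p-1) := fun p => by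
    rw [Real.rpow_def_of_pos hz, mul_comm]
  simp only [hre] at h2
  convert h2 using 1
  rw [← hre x]; ring
lemma keyDeriv {q : ℝ} (hq : 0 < q) {p : ℝ} (hp : 0 < p) :
    HasDerivAt (fun x : ℝ => ∫ z in Set.Ioo (0:ℝ) 1, z ^ (x-1) * (1-z) ^ (q-1))
      (∫ z in Set.Ioo (0:ℝ) 1, Real.log z * z ^ (p-1) * (1-z) ^ (q-1)) p := by
  have hmeas : ∀ x : ℝ, AEStronglyMeasurable (fun z : ℝ => z ^ (x-1) * (1-z) ^ (q-1))
      (volume.restrict (Set.Ioo (0:ℝ) 1)) := by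
    intro x
    apply Measurable.aestronglyMeasurable
    have m1 : Measurable fun z : ℝ => z ^ (x-1) := by measurability
    have m2 : Measurable fun z : ℝ => z ^ (q-1) := by measurability
    exact m1.mul (m2.comp (measurable_const.sub measurable_id))
  have hmeas' : AEStronglyMeasurable
      (fun z : ℝ => Real.log z * z ^ (p-1) * (1-z) ^ (q-1))
      (volume.restrict (Set.Ioo (0:ℝ) 1)) := by
    apply Measurable.aestronglyMeasurable
    have m1 : Measurable fun z : ℝ => z ^ (p-1) := by measurability
    have m2 : Measurable fun z : ℝ => z ^ (q-1) := by measurability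
    exact (Real.measurable_log.mul m1).mul (m2.comp (measurable_const.sub measurable_id))
  have h := hasDerivAt_integral_of_dominated_loc_of_deriv_le (F := fun x z =>
      z ^ (x-1) * (1-z) ^ (q-1))
    (F' := fun x z => Real.log z * z ^ (x-1) * (1-z) ^ (q-1))
    (x₀ := p) (s := ball p (p/2))
    (bound := fun z => |Real.log z| * z ^ (p/2-1) * (1-z) ^ (q-1))
    (ball_mem_nhds p (by positivity))
    (Filter.Eventually.of_forall hmeas)
    (betaInt hp hq) hmeas' ?_ (betaLogInt (by positivity) hq) ?_
  · exact h.2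
  · filter_upwards [ae_restrict_mem measurableSet_Ioo] with z hz x hx
    obtain ⟨h0, h1⟩ := hz
    have hz1 : (0:ℝ) < 1 - z := by linarith
    have hxp : p/2 - 1 ≤ x - 1 := by
      have h := mem_ball_iff_norm.1 hx
      rw [Real.norm_eq_abs] at h
      have := abs_lt.1 h
      linarith [this.1]
    have hle : z ^ (x-1) ≤ z ^ (p/2-1) :=
      Real.rpow_le_rpow_of_exponent_ge h0 h1.le hxp
    have : ‖Real.log z * z ^ (x-1) * (1-z) ^ (q-1)‖
        = |Real.log z| * z ^ (x-1) * (1-z) ^ (q-1) := by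
      rw [Real.norm_eq_abs, abs_mul, abs_mul, abs_of_nonneg (Real.rpow_nonneg h0.le _),
        abs_of_nonneg (Real.rpow_nonneg hz1.le _)]
    rw [this]
    have h2 : |Real.log z| * z ^ (x-1) ≤ |Real.log z| * z ^ (p/2-1) :=
      mul_le_mul_of_nonneg_left hle (abs_nonneg _)
    exact mul_le_mul_of_nonneg_right h2 (Real.rpow_nonneg hz1.le _)
  · filter_upwards [ae_restrict_mem measurableSet_Ioo] with z hz x _
    obtain ⟨h0, h1⟩ := hz
    have := (hasDerivAt_rpow_exp h0 x).mul_const ((1-z) ^ (q-1))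
    simpa [mul_assoc] using this
lemma diffGamma {x : ℝ} (hx : 0 < x) : DifferentiableAt ℝ Real.Gamma x :=
  Real.differentiableAt_Gamma fun m => by
    have : (0:ℝ) ≤ m := Nat.cast_nonneg m
    intro h; rw [h] at hx; linarith

lemma digamma_eq {x : ℝ} (hx : 0 < x) :
    digamma x = deriv Real.Gamma x / Real.Gamma x := by
  have hΓ : Real.Gamma x ≠ 0 := (Real.Gamma_pos_of_pos hx).ne'
  have h := ((diffGamma hx).hasDerivAt).log hΓ
  exact h.deriv

lemma hasDerivAt_betaFn {q p : ℝ} (hq : 0 < q) (hp : 0 < p) :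
    HasDerivAt (fun x => betaFn x q) (betaFn p q * (digamma p - digamma (p+q))) p := by
  have hpq : 0 < p + q := by linarith
  have hΓp := Real.Gamma_pos_of_pos hp
  have hΓq := Real.Gamma_pos_of_pos hq
  have hΓpq := Real.Gamma_pos_of_pos hpq
  have h1 : HasDerivAt (fun x => Real.Gamma x * Real.Gamma q)
      (deriv Real.Gamma p * Real.Gamma q) p := (diffGamma hp).hasDerivAt.mul_const _
  have h2 : HasDerivAt (fun x : ℝ => Real.Gamma (x + q)) (deriv Real.Gamma (p+q)) p := by
    have := ((diffGamma hpq).hasDerivAt).comp p ((hasDerivAt_id p).add_const q)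
    have h2' : HasDerivAt (fun x : ℝ => Real.Gamma (x + q)) (deriv Real.Gamma (p+q) * 1) p := this
    simpa using h2'
  have h3 : HasDerivAt (fun x => betaFn x q) ((deriv Real.Gamma p * Real.Gamma q * Real.Gamma (p + q) - Real.Gamma p * Real.Gamma q * deriv Real.Gamma (p + q)) / Real.Gamma (p + q) ^ 2) p := h1.div h2 hΓpq.ne'
  convert h3 using 1
  rw [digamma_eq hp, digamma_eq hpq, betaFn]
  field_simp

theorem stmt_0 (a b : ℝ) (ha : 0 < a) (hb : 0 < b) :
    ∫ z in Set.Ioo (0 : ℝ) 1,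
        Real.log z * z ^ (a / 2 - 1) * (1 - z) ^ (b / 2 - 1)
      = betaFn (a / 2) (b / 2) * (digamma (a / 2) - digamma ((a + b) / 2)) := by
  set p := a / 2 with hp'
  set q := b / 2 with hq'
  have hp : 0 < p := by positivity
  have hq : 0 < q := by positivity
  have hK : HasDerivAt (fun x : ℝ => ∫ z in Set.Ioo (0:ℝ) 1, z ^ (x-1) * (1-z) ^ (q-1))
      (∫ z in Set.Ioo (0:ℝ) 1, Real.log z * z ^ (p-1) * (1-z) ^ (q-1)) p := keyDeriv hq hp
  have heq : (fun x : ℝ => ∫ z in Set.Ioo (0:ℝ) 1, z ^ (x-1) * (1-z) ^ (q-1))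
      =ᶠ[nhds p] fun x => betaFn x q := by
    filter_upwards [eventually_gt_nhds hp] with x hx
    exact betaVal hx hq
  have hK' : HasDerivAt (fun x => betaFn x q)
      (∫ z in Set.Ioo (0:ℝ) 1, Real.log z * z ^ (p-1) * (1-z) ^ (q-1)) p :=
    hK.congr_of_eventuallyEq heq.symm
  have hB := hasDerivAt_betaFn hq hp
  have := hK'.unique hB
  rw [show (a+b)/2 = p + q by rw [hp', hq']; ring]
  exact this
end

section
/- For every fixed real b > 0 and every real a > 0, the second derivative with respect to a of the function a ↦ B(a/2, b/2) equals (1/4) · B(a/2, b/2) · [ (ψ(a/2) − ψ((a+b)/2))^2 + ψ′(a/2) − ψ′((a+b)/2) ]. -/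
/-- Trigamma function `ψ′(x) = d²/dx² log Γ(x)`. -/
noncomputable def trigamma (x : ℝ) : ℝ :=
  deriv (deriv (fun y => Real.log (Real.Gamma y))) x


lemma gamma_analyticAt {x : ℝ} (hx : 0 < x) : AnalyticAt ℝ Real.Gamma x := by
  have h1 : AnalyticAt ℂ Complex.Gamma (x : ℂ) := by
    refine DifferentiableOn.analyticAt (s := Metric.ball (x : ℂ) x) ?_
      (Metric.ball_mem_nhds _ hx)
    intro s hs
    refine (Complex.differentiableAt_Gamma s ?_).differentiableWithinAt
    intro m hm
    have h2 : 0 < s.re := by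
      have h3 : ‖s - x‖ < x := by simpa [Complex.dist_eq] using hs
      have h4 : |(s - (x : ℂ)).re| ≤ ‖s - x‖ := Complex.abs_re_le_norm _
      have : (s - (x : ℂ)).re = s.re - x := by simp
      rw [this] at h4
      have := abs_le.1 h4
      linarith
    rw [hm, Complex.neg_re, Complex.natCast_re] at h2
    have : (0:ℝ) ≤ m := Nat.cast_nonneg m
    linarith
  have h2 : AnalyticAt ℝ (fun y : ℝ => ((Complex.Gamma (y : ℂ)).re)) x := by
    exact (Complex.reCLM.analyticAt _).comp
      ((h1.restrictScalars).comp (Complex.ofRealCLM.analyticAt x))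
  have h3 : (fun y : ℝ => ((Complex.Gamma (y : ℂ)).re)) = Real.Gamma := by
    funext y
    rw [Complex.Gamma_ofReal, Complex.ofReal_re]
  rwa [h3] at h2

lemma logGamma_contDiffOn :
    ContDiffOn ℝ 2 (fun y => Real.log (Real.Gamma y)) (Set.Ioi (0 : ℝ)) := by
  intro x hx
  have hx' : (0 : ℝ) < x := hx
  exact ((Real.contDiffAt_log.2 (Real.Gamma_pos_of_pos hx').ne').comp x
    ((gamma_analyticAt hx').contDiffAt)).contDiffWithinAt

lemma hasDerivAt_logGamma {x : ℝ} (hx : 0 < x) :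
    HasDerivAt (fun y => Real.log (Real.Gamma y)) (digamma x) x := by
  have h := (logGamma_contDiffOn.contDiffAt (Ioi_mem_nhds hx)).differentiableAt two_ne_zero
  exact h.hasDerivAt

lemma hasDerivAt_digamma {x : ℝ} (hx : 0 < x) :
    HasDerivAt digamma (trigamma x) x := by
  have h := ((logGamma_contDiffOn.deriv_of_isOpen isOpen_Ioi (m := 1) (by norm_num)).contDiffAt
    (Ioi_mem_nhds hx)).differentiableAt one_ne_zero
  exact h.hasDerivAt

lemma hasDerivAt_beta (b : ℝ) (hb : 0 < b) {a : ℝ} (ha : 0 < a) :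
    HasDerivAt (fun a : ℝ => betaFn (a / 2) (b / 2))
      ((1/2) * betaFn (a/2) (b/2) * (digamma (a/2) - digamma ((a+b)/2))) a := by
  set F := fun y => Real.log (Real.Gamma y) with hF
  have key : ∀ y ∈ Set.Ioi (0:ℝ), betaFn (y/2) (b/2)
      = Real.exp (F (y/2) + Real.log (Real.Gamma (b/2)) - F ((y+b)/2)) := by
    intro y hy
    have h1 : (0:ℝ) < y := hy
    rw [hF]
    rw [Real.exp_sub, Real.exp_add, Real.exp_log (Real.Gamma_pos_of_pos (by positivity)),
      Real.exp_log (Real.Gamma_pos_of_pos (by positivity)),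
      Real.exp_log (Real.Gamma_pos_of_pos (by positivity))]
    unfold betaFn
    rw [show y/2 + b/2 = (y+b)/2 by ring]
  have h1 : HasDerivAt (fun y : ℝ => F (y/2)) (digamma (a/2) * (1/2)) a := by
    have := (hasDerivAt_logGamma (x := a/2) (by positivity)).comp a
      ((hasDerivAt_id a).div_const 2)
    exact this.congr_deriv (by ring)
  have h2 : HasDerivAt (fun y : ℝ => F ((y+b)/2)) (digamma ((a+b)/2) * (1/2)) a := by
    have := (hasDerivAt_logGamma (x := (a+b)/2) (by positivity)).comp a
      (((hasDerivAt_id a).add_const b).div_const 2)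
    exact this.congr_deriv (by ring)
  have hu : HasDerivAt (fun y : ℝ => F (y/2) + Real.log (Real.Gamma (b/2)) - F ((y+b)/2))
      (digamma (a/2) * (1/2) - digamma ((a+b)/2) * (1/2)) a := (h1.add_const _).sub h2
  have hexp := hu.exp
  have heq : (fun y : ℝ => betaFn (y/2) (b/2)) =ᶠ[nhds a]
      (fun y => Real.exp (F (y/2) + Real.log (Real.Gamma (b/2)) - F ((y+b)/2))) :=
    Filter.eventuallyEq_of_mem (Ioi_mem_nhds ha) key
  have := hexp.congr_of_eventuallyEq heq
  refine this.congr_deriv ?_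
  rw [← key a ha]
  ring

theorem stmt_3 (b : ℝ) (hb : 0 < b) (a : ℝ) (ha : 0 < a) :
    deriv (deriv (fun a : ℝ => betaFn (a / 2) (b / 2))) a
      = (1 / 4) * betaFn (a / 2) (b / 2) *
          ((digamma (a / 2) - digamma ((a + b) / 2)) ^ 2
            + (trigamma (a / 2) - trigamma ((a + b) / 2))) := by
  have hEq' : deriv (fun a : ℝ => betaFn (a/2) (b/2)) =ᶠ[nhds a]
      (fun y => (1/2) * betaFn (y/2) (b/2) * (digamma (y/2) - digamma ((y+b)/2))) :=
    Filter.eventuallyEq_of_mem (Ioi_mem_nhds ha)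
      (fun y hy => (hasDerivAt_beta b hb hy).deriv)
  rw [hEq'.deriv_eq]
  have hd1 : HasDerivAt (fun y : ℝ => digamma (y/2)) (trigamma (a/2) * (1/2)) a := by
    have := (hasDerivAt_digamma (x := a/2) (by positivity)).comp a
      ((hasDerivAt_id a).div_const 2)
    exact this.congr_deriv (by ring)
  have hd2 : HasDerivAt (fun y : ℝ => digamma ((y+b)/2)) (trigamma ((a+b)/2) * (1/2)) a := by
    have := (hasDerivAt_digamma (x := (a+b)/2) (by positivity)).comp a
      (((hasDerivAt_id a).add_const b).div_const 2)
    exact this.congr_deriv (by ring)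
  have h := (((hasDerivAt_beta b hb ha).const_mul (1/2 : ℝ)).mul (hd1.sub hd2))
  erw [h.deriv]
  simp only [Pi.sub_apply]
  ring
end

section
/- For all real numbers a > 0 and b > 0, the integral over (0,∞) of log(1 + (a/b)x) · f_{a,b}(x) with respect to x equals ψ((a+b)/2) − ψ(b/2). -/
open MeasureTheory Set

/-- Density of the F-distribution with degrees of freedom `(a, b)`. -/
noncomputable def fDensity (a b x : ℝ) : ℝ :=
  (Real.Gamma ((a + b) / 2) / (Real.Gamma (a / 2) * Real.Gamma (b / 2))) *
    (a / b) ^ (a / 2) * x ^ (a / 2 - 1) * (1 + a * x / b) ^ (-((a + b) / 2))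

lemma betaReal (p y : ℝ) (hp : 0 < p) (hy : 0 < y) :
    ∫ t in Ioo (0:ℝ) 1, t ^ (p-1) * (1-t) ^ (y-1)
      = Real.Gamma p * Real.Gamma y / Real.Gamma (p+y) := by
  have h := Complex.Gamma_mul_Gamma_eq_betaIntegral (s := p) (t := y) (by simpa) (by simpa)
  have hB : Complex.betaIntegral p y
      = ((∫ t in Ioo (0:ℝ) 1, t ^ (p-1) * (1-t) ^ (y-1) : ℝ) : ℂ) := by
    rw [Complex.betaIntegral, intervalIntegral.integral_of_le zero_le_one,
      ← integral_Ioc_eq_integral_Ioo]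
    calc ∫ x in Ioc (0:ℝ) 1, (x:ℂ) ^ ((p:ℂ) - 1) * (1 - (x:ℂ)) ^ ((y:ℂ) - 1)
        = ∫ x in Ioc (0:ℝ) 1, ((x ^ (p-1) * (1-x) ^ (y-1) : ℝ) : ℂ) := by
          refine setIntegral_congr_fun measurableSet_Ioc fun x hx => ?_
          rw [Complex.ofReal_mul, Complex.ofReal_cpow hx.1.le,
            Complex.ofReal_cpow (by linarith [hx.2] : (0:ℝ) ≤ 1 - x)]
          push_cast
          ring
      _ = _ := integral_ofReal
  rw [hB, ← Complex.ofReal_add, Complex.Gamma_ofReal, Complex.Gamma_ofReal,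
    Complex.Gamma_ofReal, ← Complex.ofReal_mul, ← Complex.ofReal_mul] at h
  have h2 := Complex.ofReal_injective h
  have hG : Real.Gamma (p+y) ≠ 0 := (Real.Gamma_pos_of_pos (by linarith)).ne'
  field_simp
  linarith [h2]

lemma betaIntegrable (p y : ℝ) (hp : 0 < p) (hy : 0 < y) :
    IntegrableOn (fun t : ℝ => t ^ (p-1) * (1-t) ^ (y-1)) (Ioo (0:ℝ) 1) := by
  have h := Complex.betaIntegral_convergent (u := p) (v := y) (by simpa) (by simpa)
  have h2 : IntegrableOn (fun x : ℝ => (x:ℂ) ^ ((p:ℂ)-1) * (1-(x:ℂ)) ^ ((y:ℂ)-1))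
      (Ioo (0:ℝ) 1) := (intervalIntegrable_iff_integrableOn_Ioo_of_le zero_le_one).mp h
  have h3 := h2.re
  refine IntegrableOn.congr_fun h3 (fun x hx => ?_) measurableSet_Ioo
  have : (x:ℂ) ^ ((p:ℂ)-1) * (1-(x:ℂ)) ^ ((y:ℂ)-1)
      = ((x ^ (p-1) * (1-x) ^ (y-1) : ℝ) : ℂ) := by
    rw [Complex.ofReal_mul, Complex.ofReal_cpow hx.1.le,
      Complex.ofReal_cpow (by linarith [hx.2] : (0:ℝ) ≤ 1 - x)]
    push_cast; ring
  simp [this]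


lemma hasDerivAt_betaFun (p q : ℝ) (hp : 0 < p) (hq : 0 < q) :
    HasDerivAt (fun y => ∫ t in Ioo (0:ℝ) 1, t ^ (p-1) * (1-t) ^ (y-1))
      (∫ t in Ioo (0:ℝ) 1, t ^ (p-1) * (1-t) ^ (q-1) * Real.log (1-t)) q := by
  set μ := volume.restrict (Ioo (0:ℝ) 1)
  have key := hasDerivAt_integral_of_dominated_loc_of_deriv_le (μ := μ)
    (F := fun y t => t ^ (p-1) * (1-t) ^ (y-1))
    (F' := fun y t => t ^ (p-1) * (1-t) ^ (y-1) * Real.log (1-t))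
    (x₀ := q) (bound := fun t => (4/q) * (t ^ (p-1) * (1-t) ^ (q/4-1)))
    (s := Metric.ball q (q/4)) (Metric.ball_mem_nhds _ (by positivity)) ?meas ?int ?meas' ?bnd ?bint ?diff
  · exact key.2
  case meas =>
    filter_upwards with y
    refine ContinuousOn.aestronglyMeasurable ?_ measurableSet_Ioo
    exact (continuousOn_id.rpow_const (fun t ht => Or.inl (ne_of_gt ht.1))).mul
      ((continuousOn_const.sub continuousOn_id).rpow_const
        (fun t ht => Or.inl (by simp; linarith [ht.2])))
  case int => exact betaIntegrable p q hp hq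
  case meas' =>
    refine ContinuousOn.aestronglyMeasurable ?_ measurableSet_Ioo
    exact ((continuousOn_id.rpow_const (fun t ht => Or.inl (ne_of_gt ht.1))).mul
      ((continuousOn_const.sub continuousOn_id).rpow_const
        (fun t ht => Or.inl (by simp; linarith [ht.2])))).mul
      ((continuousOn_const.sub continuousOn_id).log
        (fun t ht => by simp; linarith [ht.2]))
  case bnd =>
    rw [ae_restrict_iff' measurableSet_Ioo]
    filter_upwards with t ht
    intro y hy
    rw [Metric.mem_ball, Real.dist_eq, abs_lt] at hy
    obtain ⟨ht0, ht1⟩ := ht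
    have h1t : 0 < 1 - t := by linarith
    have h1t' : 1 - t ≤ 1 := by linarith
    have hlog : Real.log (1-t) ≤ 0 := Real.log_nonpos h1t.le h1t'
    -- |log(1-t)| ≤ (4/q) (1-t)^(-q/4)
    have hlb : |Real.log (1-t)| ≤ (4/q) * (1-t) ^ (-(q/4)) := by
      rw [abs_of_nonpos hlog]
      have h2 : Real.log ((1-t) ^ (-(q/4))) ≤ (1-t) ^ (-(q/4)) - 1 :=
        Real.log_le_sub_one_of_pos (Real.rpow_pos_of_pos h1t _)
      rw [Real.log_rpow h1t] at h2
      have hq4 : (0:ℝ) < q/4 := by positivity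
      have h5 : -Real.log (1-t) ≤ (1-t) ^ (-(q/4)) / (q/4) :=
        (le_div_iff₀ hq4).mpr (by nlinarith [Real.rpow_pos_of_pos h1t (-(q/4))])
      have h6 : (1-t) ^ (-(q/4)) / (q/4) = 4/q * (1-t) ^ (-(q/4)) := by
        field_simp
      linarith
    have hmono : (1-t) ^ (y-1) ≤ (1-t) ^ (q/2-1) :=
      Real.rpow_le_rpow_of_exponent_ge h1t h1t' (by linarith)
    calc ‖t ^ (p-1) * (1-t) ^ (y-1) * Real.log (1-t)‖
        = t ^ (p-1) * (1-t) ^ (y-1) * |Real.log (1-t)| := by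
          rw [norm_mul, norm_mul, Real.norm_eq_abs, Real.norm_eq_abs, Real.norm_eq_abs,
            abs_of_nonneg (Real.rpow_nonneg ht0.le _),
            abs_of_nonneg (Real.rpow_nonneg h1t.le _)]
      _ ≤ t ^ (p-1) * (1-t) ^ (q/2-1) * ((4/q) * (1-t) ^ (-(q/4))) := by
          apply mul_le_mul
          · exact mul_le_mul_of_nonneg_left hmono (Real.rpow_nonneg ht0.le _)
          · exact hlb
          · exact abs_nonneg _
          · positivity
      _ = (4/q) * (t ^ (p-1) * ((1-t) ^ (q/2-1) * (1-t) ^ (-(q/4)))) := by ring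
      _ ≤ (4/q) * (t ^ (p-1) * (1-t) ^ (q/4-1)) := by
          rw [← Real.rpow_add h1t]
          apply mul_le_mul_of_nonneg_left _ (by positivity)
          apply mul_le_mul_of_nonneg_left _ (Real.rpow_nonneg ht0.le _)
          exact le_of_eq (by ring_nf)
  case bint =>
    exact (betaIntegrable p (q/4) hp (by positivity)).const_mul _
  case diff =>
    rw [ae_restrict_iff' measurableSet_Ioo]
    filter_upwards with t ht
    intro y hy
    obtain ⟨ht0, ht1⟩ := ht
    have h1t : 0 < 1 - t := by linarith
    have h := (((Real.hasStrictDerivAt_const_rpow h1t (y-1)).hasDerivAt).comp y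
      ((hasDerivAt_id y).sub_const 1)).const_mul (t ^ (p-1))
    simpa [mul_comm, mul_assoc, mul_left_comm] using h


lemma change_of_var (a b : ℝ) (ha : 0 < a) (hb : 0 < b) :
    ∫ x in Ioi (0:ℝ), Real.log (1 + (a / b) * x) * fDensity a b x
      = (Real.Gamma ((a+b)/2) / (Real.Gamma (a/2) * Real.Gamma (b/2))) *
        ∫ t in Ioo (0:ℝ) 1,
          (- Real.log (1-t)) * (t ^ (a/2-1) * (1-t) ^ (b/2-1)) := by
  set φ : ℝ → ℝ := fun t => b * t / (a * (1-t)) with hφ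
  have himg : φ '' Ioo 0 1 = Ioi (0:ℝ) := by
    ext x
    simp only [mem_image, mem_Ioi, mem_Ioo]
    constructor
    · rintro ⟨t, ⟨ht0, ht1⟩, rfl⟩
      have : 0 < 1 - t := by linarith
      positivity
    · intro hx
      refine ⟨a * x / (b + a * x), ⟨by positivity, ?_⟩, ?_⟩
      · rw [div_lt_one (by positivity)]; linarith
      · rw [hφ]
        have hba : (0:ℝ) < b + a * x := by positivity
        field_simp
        ring
        exact mul_inv_cancel₀ hb.ne'
  have hderiv : ∀ t ∈ Ioo (0:ℝ) 1,
      HasDerivWithinAt φ (b / (a * (1-t)^2)) (Ioo 0 1) t := by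
    intro t ht
    have h1t : (0:ℝ) < 1 - t := by linarith [ht.2]
    have hnum : HasDerivAt (fun t : ℝ => b * t) b t := by
      simpa using (hasDerivAt_id t).const_mul b
    have hden : HasDerivAt (fun t : ℝ => a * (1-t)) (-a) t := by
      have := ((hasDerivAt_id t).const_sub 1).const_mul a
      simpa using this
    have h := hnum.div hden (by positivity)
    have heq : (b * (a * (1-t)) - b * t * (-a)) / (a * (1-t)) ^ 2 = b / (a * (1-t)^2) := by
      field_simp
      ring
    rw [heq] at h
    exact h.hasDerivWithinAt
  have hinj : InjOn φ (Ioo 0 1) := by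
    intro t1 h1 t2 h2 he
    have h11 : (0:ℝ) < 1 - t1 := by linarith [h1.2]
    have h21 : (0:ℝ) < 1 - t2 := by linarith [h2.2]
    rw [hφ] at he
    field_simp at he
    have h3 : a * b * t1 = a * b * t2 := by linear_combination (a * b) * he
    exact mul_left_cancel₀ (by positivity) h3
  rw [← himg, integral_image_eq_integral_abs_deriv_smul measurableSet_Ioo hderiv hinj,
    ← MeasureTheory.integral_const_mul]
  refine setIntegral_congr_fun measurableSet_Ioo fun t ht => ?_
  obtain ⟨ht0, ht1⟩ := ht
  have hu : (0:ℝ) < 1 - t := by linarith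
  set u := 1 - t with hu'
  set C := Real.Gamma ((a+b)/2) / (Real.Gamma (a/2) * Real.Gamma (b/2)) with hC
  have hφt : φ t = b * t / (a * u) := rfl
  have h1 : 1 + a * φ t / b = u⁻¹ := by
    rw [hφt]; field_simp; rw [hu']; ring
  have h1' : 1 + a / b * φ t = u⁻¹ := by
    rw [hφt]; field_simp; rw [hu']; ring
  have hφpos : 0 < φ t := by rw [hφt]; positivity
  have habs : |b / (a * u ^ 2)| = b / (a * u ^ 2) := abs_of_pos (by positivity)
  rw [smul_eq_mul, fDensity, h1, h1', habs, Real.log_inv,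
    Real.inv_rpow hu.le, ← Real.rpow_neg hu.le, neg_neg]
  have hφr : φ t ^ (a/2 - 1) = b ^ (a/2-1) * t ^ (a/2-1) / (a ^ (a/2-1) * u ^ (a/2-1)) := by
    rw [hφt, Real.div_rpow (by positivity) (by positivity),
      Real.mul_rpow hb.le ht0.le, Real.mul_rpow ha.le hu.le]
  have hab : (a/b) ^ (a/2) = a ^ (a/2) / b ^ (a/2) := Real.div_rpow ha.le hb.le _
  rw [hφr, hab]
  have hA : a ^ (a/2) = a ^ (a/2-1) * a := by
    rw [← Real.rpow_add_one ha.ne']; ring_nf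
  have hB : b ^ (a/2) = b ^ (a/2-1) * b := by
    rw [← Real.rpow_add_one hb.ne']; ring_nf
  have hU : u ^ ((a+b)/2) = u ^ (a/2-1) * u ^ (2:ℝ) * u ^ (b/2-1) := by
    rw [← Real.rpow_add hu, ← Real.rpow_add hu]
    congr 1
    ring
  have hU2 : u ^ (2:ℝ) = u ^ (2:ℕ) := by
    rw [← Real.rpow_natCast u 2]; norm_num
  rw [hA, hB, hU, hU2]
  have h6 : a ^ (a/2-1) ≠ 0 := (Real.rpow_pos_of_pos ha _).ne'
  have h7 : b ^ (a/2-1) ≠ 0 := (Real.rpow_pos_of_pos hb _).ne'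
  have h8 : u ^ (a/2-1) ≠ 0 := (Real.rpow_pos_of_pos hu _).ne'
  have key : (b/(a*u^2)) * ((a^(a/2-1)*a)/(b^(a/2-1)*b))
        * (b^(a/2-1) * t^(a/2-1)/(a^(a/2-1)*u^(a/2-1)))
        * (u^(a/2-1)*(u:ℝ)^(2:ℕ)*u^(b/2-1)) = t^(a/2-1)*u^(b/2-1) := by
    field_simp
  linear_combination (-Real.log u * C) * key

theorem stmt_4 (a b : ℝ) (ha : 0 < a) (hb : 0 < b) :
    ∫ x in Set.Ioi (0 : ℝ), Real.log (1 + (a / b) * x) * fDensity a b x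
      = digamma ((a + b) / 2) - digamma (b / 2) := by
  set p := a / 2 with hp'
  set q := b / 2 with hq'
  have hp : 0 < p := by positivity
  have hq : 0 < q := by positivity
  have hpq : (a + b) / 2 = p + q := by rw [hp', hq']; ring
  set I := ∫ t in Ioo (0:ℝ) 1, t ^ (p-1) * (1-t) ^ (q-1) * Real.log (1-t) with hI
  have hd1 : HasDerivAt (fun y => ∫ t in Ioo (0:ℝ) 1, t ^ (p-1) * (1-t) ^ (y-1)) I q :=
    hasDerivAt_betaFun p q hp hq
  have hGdiff : ∀ x : ℝ, 0 < x →
      HasDerivAt (fun y => Real.log (Real.Gamma y)) (digamma x) x := by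
    intro x hx
    have hxn : ∀ n : ℕ, x ≠ -n := by
      intro n
      have : (0:ℝ) ≤ n := n.cast_nonneg
      intro h; rw [h] at hx; linarith
    have hdiff : DifferentiableAt ℝ (fun y => Real.log (Real.Gamma y)) x :=
      (Real.differentiableAt_Gamma hxn).log (Real.Gamma_pos_of_pos hx).ne'
    exact hdiff.hasDerivAt
  have hLq := hGdiff q hq
  have hLpq := hGdiff (p+q) (by positivity)
  set H : ℝ → ℝ := fun y => Real.Gamma p *
    Real.exp (Real.log (Real.Gamma y) - Real.log (Real.Gamma (p+y))) with hH
  have hHd : HasDerivAt H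
      (Real.Gamma p * Real.exp (Real.log (Real.Gamma q) - Real.log (Real.Gamma (p+q)))
        * (digamma q - digamma (p+q))) q := by
    have hc : HasDerivAt (fun y : ℝ => Real.log (Real.Gamma (p+y))) (digamma (p+q)) q := by
      have := hLpq.comp q ((hasDerivAt_id q).const_add p)
      rw [mul_one] at this
      exact this
    have h2 := ((hLq.sub hc).exp).const_mul (Real.Gamma p)
    refine h2.congr_deriv ?_
    simp only [Pi.sub_apply]
    ring
  have hev : (fun y => ∫ t in Ioo (0:ℝ) 1, t ^ (p-1) * (1-t) ^ (y-1)) =ᶠ[nhds q] H := by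
    filter_upwards [eventually_gt_nhds hq] with y hy
    rw [betaReal p y hp hy, hH]
    simp only []
    rw [Real.exp_sub, Real.exp_log (Real.Gamma_pos_of_pos hy),
      Real.exp_log (Real.Gamma_pos_of_pos (by positivity))]
    ring
  have hI_eq : I = Real.Gamma p * Real.Gamma q / Real.Gamma (p+q)
      * (digamma q - digamma (p+q)) := by
    have hd2 : HasDerivAt H I q := hd1.congr_of_eventuallyEq hev.symm
    have h3 := hd2.unique hHd
    rw [h3, Real.exp_sub, Real.exp_log (Real.Gamma_pos_of_pos hq),
      Real.exp_log (Real.Gamma_pos_of_pos (by positivity))]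
    ring
  rw [change_of_var a b ha hb]
  have hneg : (∫ t in Ioo (0:ℝ) 1,
      (-Real.log (1-t)) * (t ^ (a/2-1) * (1-t) ^ (b/2-1))) = -I := by
    rw [hI, ← integral_neg]
    exact integral_congr_ae (Filter.Eventually.of_forall fun t => by rw [← hp', ← hq']; ring)
  rw [hneg, hpq, hI_eq, ← hp', ← hq']
  have hGp := Real.Gamma_pos_of_pos hp
  have hGq := Real.Gamma_pos_of_pos hq
  have hGpq := Real.Gamma_pos_of_pos (show 0 < p + q by positivity)
  field_simp
  ring
end

section
/- For every fixed real p > 0, the integral over (0,∞) of N · log(1 + p x/(N−p−1)) · (1 + p x/(N−p−1))^{−(N−1)/2} · (p x)^{p/2−1} with respect to x converges, as the real number N tends to infinity, to the integral over (0,∞) of (p x)^{p/2} · e^{−p x/2} with respect to x. -/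
open MeasureTheory Filter

/-- Bernoulli-based monotonicity: `m ↦ (1 + c/(2m))^m` is monotone. -/
lemma stmt9_aux_mono {c m₀ m : ℝ} (hc : 0 ≤ c) (h0 : 0 < m₀) (hm : m₀ ≤ m) :
    (1 + c / (2 * m₀)) ^ m₀ ≤ (1 + c / (2 * m)) ^ m := by
  have hmpos : 0 < m := h0.trans_le hm
  have hs : 0 ≤ c / (2 * m) := by positivity
  have hr : 1 ≤ m / m₀ := (one_le_div h0).2 hm
  have hbern : 1 + (m / m₀) * (c / (2 * m)) ≤ (1 + c / (2 * m)) ^ (m / m₀) :=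
    one_add_mul_self_le_rpow_one_add (by linarith) hr
  have heq : (m / m₀) * (c / (2 * m)) = c / (2 * m₀) := by
    field_simp
  rw [heq] at hbern
  calc (1 + c / (2 * m₀)) ^ m₀ ≤ ((1 + c / (2 * m)) ^ (m / m₀)) ^ m₀ :=
        Real.rpow_le_rpow (by positivity) hbern h0.le
    _ = (1 + c / (2 * m)) ^ m := by
        rw [← Real.rpow_mul (by positivity)]
        congr 1
        field_simp

theorem stmt_9 (p : ℝ) (hp : 0 < p) :
    Tendsto
      (fun N : ℝ =>
        ∫ x in Set.Ioi (0 : ℝ),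
          N * Real.log (1 + p * x / (N - p - 1)) *
            (1 + p * x / (N - p - 1)) ^ (-((N - 1) / 2)) * (p * x) ^ (p / 2 - 1))
      atTop
      (nhds (∫ x in Set.Ioi (0 : ℝ), (p * x) ^ (p / 2) * Real.exp (-(p * x) / 2))) := by
  have hp1 : (0:ℝ) < p + 1 := by linarith
  set bound : ℝ → ℝ :=
    fun x => 2 * (p * x) ^ (p / 2) * (1 + p * x / (2 * (p + 1))) ^ (-(p + 1)) with hbdef
  apply tendsto_integral_filter_of_dominated_convergence bound
  · -- measurability
    filter_upwards [eventually_gt_atTop (p + 1)] with N hN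
    have hd : 0 < N - p - 1 := by linarith
    have c1 : Continuous fun x : ℝ => 1 + p * x / (N - p - 1) := by continuity
    have hcont : ContinuousOn
        (fun x : ℝ => N * Real.log (1 + p * x / (N - p - 1)) *
          (1 + p * x / (N - p - 1)) ^ (-((N - 1) / 2)) * (p * x) ^ (p / 2 - 1))
        (Set.Ioi 0) := by
      apply ContinuousOn.mul
      apply ContinuousOn.mul
      · refine continuousOn_const.mul (ContinuousOn.log c1.continuousOn fun x hx => ?_)
        have hx : 0 < x := hx
        have : 0 < p * x / (N - p - 1) := by positivity
        positivity
      · refine c1.continuousOn.rpow_const fun x hx => Or.inl ?_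
        have hx : 0 < x := hx
        have : 0 < p * x / (N - p - 1) := by positivity
        positivity
      · exact ((continuous_const.mul continuous_id).continuousOn).rpow_const
          fun x hx => Or.inl (ne_of_gt (mul_pos hp hx))
    exact hcont.aestronglyMeasurable measurableSet_Ioi
  · -- domination
    filter_upwards [eventually_ge_atTop (2 * p + 3)] with N hN
    rw [ae_restrict_iff' measurableSet_Ioi]
    refine ae_of_all _ fun x hx => ?_
    have hx : 0 < x := hx
    have hd : 0 < N - p - 1 := by linarith
    have hcx : 0 < p * x := mul_pos hp hx
    set t := p * x / (N - p - 1) with htdef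
    have ht : 0 < t := by positivity
    have hNpos : 0 < N := by linarith
    have hlognn : 0 ≤ Real.log (1 + t) := Real.log_nonneg (by linarith)
    have hlog_le : Real.log (1 + t) ≤ t := by
      have := Real.log_le_sub_one_of_pos (show 0 < 1 + t by linarith)
      linarith
    -- prefactor bound
    have pre : N * Real.log (1 + t) ≤ 2 * (p * x) := by
      have h1 : N * Real.log (1 + t) ≤ N * t :=
        mul_le_mul_of_nonneg_left hlog_le hNpos.le
      have h2 : N * t ≤ 2 * (p * x) := by
        rw [htdef, mul_div_assoc', div_le_iff₀ hd]
        nlinarith [mul_nonneg hcx.le (show (0:ℝ) ≤ N - 2 * p - 2 by linarith)]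
      linarith
    -- power bound
    have powbd : (1 + t) ^ (-((N - 1) / 2)) ≤ (1 + p * x / (2 * (p + 1))) ^ (-(p + 1)) := by
      have hm : p + 1 ≤ (N - 1) / 2 := by linarith
      have key := stmt9_aux_mono (c := p * x) hcx.le hp1 hm
      have h2m : 2 * ((N - 1) / 2) = N - 1 := by ring
      rw [h2m] at key
      have hb : p * x / (N - 1) ≤ t := by
        rw [htdef]
        exact div_le_div_of_nonneg_left hcx.le hd (by linarith)
      have hb' : 0 ≤ p * x / (N - 1) := div_nonneg hcx.le (by linarith)
      have key2 : (1 + p * x / (2 * (p + 1))) ^ (p + 1) ≤ (1 + t) ^ ((N - 1) / 2) := by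
        refine key.trans (Real.rpow_le_rpow (by linarith) (by linarith) (by linarith))
      rw [Real.rpow_neg (by positivity), Real.rpow_neg (by positivity)]
      exact inv_anti₀ (by positivity) key2
    have hFnn : 0 ≤ N * Real.log (1 + t) * (1 + t) ^ (-((N - 1) / 2)) * (p * x) ^ (p / 2 - 1) := by
      apply mul_nonneg (mul_nonneg (mul_nonneg hNpos.le hlognn) _) _
      · exact Real.rpow_nonneg (by linarith) _
      · exact Real.rpow_nonneg hcx.le _
    rw [Real.norm_of_nonneg hFnn]
    have hsplit : (p * x) ^ (p / 2) = (p * x) * (p * x) ^ (p / 2 - 1) := by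
      have h := Real.rpow_add hcx 1 (p / 2 - 1)
      rw [Real.rpow_one, show (1:ℝ) + (p / 2 - 1) = p / 2 by ring] at h
      exact h
    have step : N * Real.log (1 + t) * (1 + t) ^ (-((N - 1) / 2)) * (p * x) ^ (p / 2 - 1)
        ≤ 2 * (p * x) * (1 + p * x / (2 * (p + 1))) ^ (-(p + 1)) * (p * x) ^ (p / 2 - 1) := by
      have h1 : N * Real.log (1 + t) * (1 + t) ^ (-((N - 1) / 2))
          ≤ 2 * (p * x) * (1 + p * x / (2 * (p + 1))) ^ (-(p + 1)) := by
        apply mul_le_mul pre powbd (Real.rpow_nonneg (by linarith) _) (by positivity)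
      exact mul_le_mul_of_nonneg_right h1 (Real.rpow_nonneg hcx.le _)
    refine step.trans_eq ?_
    rw [hbdef]
    simp only []
    rw [hsplit]
    ring
  · -- integrability of the bound
    have hIoi : Set.Ioc (0:ℝ) 1 ∪ Set.Ioi 1 = Set.Ioi 0 := Set.Ioc_union_Ioi_eq_Ioi zero_le_one
    show IntegrableOn bound (Set.Ioi 0) volume
    rw [← hIoi]
    have hbm : ∀ s : Set ℝ, s ⊆ Set.Ioi 0 → MeasurableSet s →
        AEStronglyMeasurable bound (volume.restrict s) := by
      intro s hs hms
      have hcont : ContinuousOn bound (Set.Ioi 0) := by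
        apply ContinuousOn.mul
        · exact continuousOn_const.mul
            (((continuous_const.mul continuous_id).continuousOn).rpow_const
              fun x hx => Or.inl (ne_of_gt (mul_pos hp hx)))
        · refine (Continuous.continuousOn (by continuity)).rpow_const fun x hx => Or.inl ?_
          have hx : (0:ℝ) < x := hx
          have : 0 < p * x / (2 * (p + 1)) := by positivity
          positivity
      exact (hcont.mono hs).aestronglyMeasurable hms
    rw [MeasureTheory.integrableOn_union]
    constructor
    · -- near zero
      have hint : IntegrableOn (fun x : ℝ => 2 * p ^ (p / 2) * x ^ (p / 2)) (Set.Ioc 0 1) := by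
        apply Integrable.const_mul
        have h1 : IntegrableOn (fun x : ℝ => x ^ (p / 2)) (Set.Ioo 0 1) :=
          (intervalIntegral.integrableOn_Ioo_rpow_iff one_pos).2 (by linarith)
        exact h1.congr_set_ae MeasureTheory.Ioo_ae_eq_Ioc.symm
      refine hint.mono' (hbm _ Set.Ioc_subset_Ioi_self measurableSet_Ioc) ?_
      rw [ae_restrict_iff' measurableSet_Ioc]
      refine ae_of_all _ fun x hx => ?_
      obtain ⟨hx0, hx1⟩ := hx
      have hcx : 0 < p * x := mul_pos hp hx0
      have hbnn : (0:ℝ) ≤ 2 * (p * x) ^ (p / 2) * (1 + p * x / (2 * (p + 1))) ^ (-(p + 1)) := by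
        positivity
      show ‖2 * (p * x) ^ (p / 2) * (1 + p * x / (2 * (p + 1))) ^ (-(p + 1))‖ ≤ _
      rw [Real.norm_of_nonneg hbnn]
      have h1 : (1 + p * x / (2 * (p + 1))) ^ (-(p + 1)) ≤ 1 :=
        Real.rpow_le_one_of_one_le_of_nonpos (le_add_of_nonneg_right (by positivity)) (by linarith)
      have h2 : (p * x) ^ (p / 2) = p ^ (p / 2) * x ^ (p / 2) :=
        Real.mul_rpow hp.le hx0.le
      calc 2 * (p * x) ^ (p / 2) * (1 + p * x / (2 * (p + 1))) ^ (-(p + 1))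
          ≤ 2 * (p * x) ^ (p / 2) * 1 := by
            apply mul_le_mul_of_nonneg_left h1 (by positivity)
        _ = 2 * p ^ (p / 2) * x ^ (p / 2) := by rw [h2]; ring
    · -- tail
      have hint : IntegrableOn
          (fun x : ℝ => (2 * p ^ (p / 2) * (p / (2 * (p + 1))) ^ (-(p + 1))) * x ^ (p / 2 - (p + 1)))
          (Set.Ioi 1) :=
        (integrableOn_Ioi_rpow_of_lt (by linarith) one_pos).const_mul _
      refine hint.mono' (hbm _ (fun x hx => Set.mem_Ioi.2 (lt_trans one_pos (Set.mem_Ioi.1 hx))) measurableSet_Ioi) ?_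
      rw [ae_restrict_iff' measurableSet_Ioi]
      refine ae_of_all _ fun x hx => ?_
      have hx1 : (1:ℝ) < x := hx
      have hx0 : (0:ℝ) < x := lt_trans one_pos hx1
      have hcx : 0 < p * x := mul_pos hp hx0
      have hbnn : (0:ℝ) ≤ 2 * (p * x) ^ (p / 2) * (1 + p * x / (2 * (p + 1))) ^ (-(p + 1)) := by
        positivity
      show ‖2 * (p * x) ^ (p / 2) * (1 + p * x / (2 * (p + 1))) ^ (-(p + 1))‖ ≤ _
      rw [Real.norm_of_nonneg hbnn]
      have hq : 0 < p * x / (2 * (p + 1)) := by positivity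
      have h1 : (1 + p * x / (2 * (p + 1))) ^ (-(p + 1))
          ≤ (p * x / (2 * (p + 1))) ^ (-(p + 1)) :=
        Real.rpow_le_rpow_of_nonpos hq (by linarith) (by linarith)
      have h2 : (p * x / (2 * (p + 1))) ^ (-(p + 1))
          = (p / (2 * (p + 1))) ^ (-(p + 1)) * x ^ (-(p + 1)) := by
        rw [show p * x / (2 * (p + 1)) = (p / (2 * (p + 1))) * x by ring,
          Real.mul_rpow (by positivity) hx0.le]
      have h3 : (p * x) ^ (p / 2) = p ^ (p / 2) * x ^ (p / 2) :=
        Real.mul_rpow hp.le hx0.le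
      have h4 : x ^ (p / 2) * x ^ (-(p + 1)) = x ^ (p / 2 - (p + 1)) := by
        rw [← Real.rpow_add hx0]
        ring_nf
      calc 2 * (p * x) ^ (p / 2) * (1 + p * x / (2 * (p + 1))) ^ (-(p + 1))
          ≤ 2 * (p * x) ^ (p / 2) * ((p / (2 * (p + 1))) ^ (-(p + 1)) * x ^ (-(p + 1))) := by
            rw [← h2]
            exact mul_le_mul_of_nonneg_left h1 (by positivity)
        _ = (2 * p ^ (p / 2) * (p / (2 * (p + 1))) ^ (-(p + 1))) * x ^ (p / 2 - (p + 1)) := by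
            rw [h3, ← h4]; ring
  · -- pointwise limit
    rw [ae_restrict_iff' measurableSet_Ioi]
    refine ae_of_all _ fun x hx => ?_
    have hx : 0 < x := hx
    have hcx : 0 < p * x := mul_pos hp hx
    set c := p * x with hcdef
    have shift : Tendsto (fun N : ℝ => N - p - 1) atTop atTop := by
      apply tendsto_atTop_add_const_right
      apply tendsto_atTop_add_const_right
      exact tendsto_id
    have hA : Tendsto (fun N : ℝ => (N - p - 1) * Real.log (1 + c / (N - p - 1)))
        atTop (nhds c) := (Real.tendsto_mul_log_one_add_div_atTop c).comp shift
    have hEv : ∀ᶠ N : ℝ in atTop, 0 < N - p - 1 := by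
      filter_upwards [eventually_gt_atTop (p + 1)] with N hN
      linarith
    -- N/(N-p-1) → 1
    have hRatio : Tendsto (fun N : ℝ => N / (N - p - 1)) atTop (nhds 1) := by
      have h0 : Tendsto (fun N : ℝ => (p + 1) / (N - p - 1)) atTop (nhds 0) :=
        tendsto_const_nhds.div_atTop shift
      have h1 : Tendsto (fun N : ℝ => 1 + (p + 1) / (N - p - 1)) atTop (nhds 1) := by
        simpa using tendsto_const_nhds.add h0
      refine h1.congr' ?_
      filter_upwards [hEv] with N hN
      field_simp
      ring
    -- (N-1)/(2(N-p-1)) → 1/2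
    have hHalf : Tendsto (fun N : ℝ => (N - 1) / (2 * (N - p - 1))) atTop (nhds (1 / 2)) := by
      have h0 : Tendsto (fun N : ℝ => p / (N - p - 1)) atTop (nhds 0) :=
        tendsto_const_nhds.div_atTop shift
      have h1 : Tendsto (fun N : ℝ => (1 + p / (N - p - 1)) / 2) atTop (nhds (1 / 2)) := by
        have h2 : Tendsto (fun N : ℝ => 1 + p / (N - p - 1)) atTop (nhds (1 + 0)) :=
          (tendsto_const_nhds : Tendsto (fun _ : ℝ => (1:ℝ)) atTop (nhds 1)).add h0
        rw [add_zero] at h2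
        exact h2.div_const 2
      refine h1.congr' ?_
      filter_upwards [hEv] with N hN
      have : N - p - 1 ≠ 0 := ne_of_gt hN
      field_simp
      ring
    have hPre : Tendsto (fun N : ℝ => N * Real.log (1 + c / (N - p - 1))) atTop (nhds c) := by
      have h1 : Tendsto (fun N : ℝ =>
          (N / (N - p - 1)) * ((N - p - 1) * Real.log (1 + c / (N - p - 1))))
          atTop (nhds (1 * c)) := hRatio.mul hA
      rw [one_mul] at h1
      refine h1.congr' ?_
      filter_upwards [hEv] with N hN
      have : N - p - 1 ≠ 0 := ne_of_gt hN
      field_simp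
    have hPow : Tendsto (fun N : ℝ => (1 + c / (N - p - 1)) ^ (-((N - 1) / 2)))
        atTop (nhds (Real.exp (-(c / 2)))) := by
      have hArg : Tendsto (fun N : ℝ =>
          Real.log (1 + c / (N - p - 1)) * (-((N - 1) / 2))) atTop (nhds (-(c / 2))) := by
        have h1 : Tendsto (fun N : ℝ =>
            -(((N - 1) / (2 * (N - p - 1))) * ((N - p - 1) * Real.log (1 + c / (N - p - 1)))))
            atTop (nhds (-(1 / 2 * c))) := (hHalf.mul hA).neg
        have h2 : -(1 / 2 * c) = -(c / 2) := by ring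
        rw [h2] at h1
        refine h1.congr' ?_
        filter_upwards [hEv] with N hN
        have : N - p - 1 ≠ 0 := ne_of_gt hN
        field_simp
      have h3 := (Real.continuous_exp.tendsto _).comp hArg
      refine h3.congr' ?_
      filter_upwards [hEv] with N hN
      have hbase : 0 < 1 + c / (N - p - 1) := by positivity
      rw [Function.comp_apply, ← Real.rpow_def_of_pos hbase]
    have hAll : Tendsto (fun N : ℝ =>
        N * Real.log (1 + c / (N - p - 1)) * (1 + c / (N - p - 1)) ^ (-((N - 1) / 2))
          * (p * x) ^ (p / 2 - 1))
        atTop (nhds (c * Real.exp (-(c / 2)) * (p * x) ^ (p / 2 - 1))) :=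
      (hPre.mul hPow).mul tendsto_const_nhds
    have hEq : c * Real.exp (-(c / 2)) * (p * x) ^ (p / 2 - 1)
        = (p * x) ^ (p / 2) * Real.exp (-(p * x) / 2) := by
      rw [show (p * x) ^ (p / 2) = (p * x) * (p * x) ^ (p / 2 - 1) by
        have h := Real.rpow_add hcx 1 (p / 2 - 1)
        rw [Real.rpow_one, show (1:ℝ) + (p / 2 - 1) = p / 2 by ring] at h
        exact h]
      rw [hcdef, show -(p * x / 2) = -(p * x) / 2 by ring]
      ring
    rw [← hEq]
    exact hAll
end

section
/- For every fixed real p > 0, the quantity N^2 · (ψ′((N−p−1)/2) − ψ′((N−1)/2)) tends to 2p as the real number N tends to infinity. -/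
open Filter
open Real Set

namespace TrigammaAux

/-- partial sums approximating digamma: derivative of `logGammaSeq · n`. -/
noncomputable def gSeq (n : ℕ) (x : ℝ) : ℝ :=
  Real.log n - ∑ m ∈ Finset.range (n + 1), (x + m)⁻¹

/-- partial sums approximating trigamma: derivative of `gSeq n`. -/
noncomputable def hSeq (n : ℕ) (x : ℝ) : ℝ :=
  ∑ m ∈ Finset.range (n + 1), ((x + m) ^ 2)⁻¹

/-- trigamma series on `(0,∞)`. -/
noncomputable def psi1 (x : ℝ) : ℝ := ∑' n : ℕ, ((x + n) ^ 2)⁻¹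

lemma hasDerivAt_logGammaSeq {x : ℝ} (hx : 0 < x) (n : ℕ) :
    HasDerivAt (fun y => Real.BohrMollerup.logGammaSeq y n) (gSeq n x) x := by
  have h1 : HasDerivAt (fun y : ℝ => y * Real.log n + Real.log (Nat.factorial n)) (Real.log n) x := by
    simpa using ((hasDerivAt_id x).mul_const (Real.log n)).add_const (Real.log (Nat.factorial n))
  have h2 : HasDerivAt (fun y : ℝ => ∑ m ∈ Finset.range (n + 1), Real.log (y + m))
      (∑ m ∈ Finset.range (n + 1), (x + m)⁻¹) x := by
    apply HasDerivAt.fun_sum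
    intro m _
    have hne : x + (m : ℝ) ≠ 0 := by positivity
    simpa [one_div] using (((hasDerivAt_id x).add_const (m : ℝ)).log hne)
  simpa [Real.BohrMollerup.logGammaSeq, gSeq] using h1.fun_sub h2

lemma hasDerivAt_gSeq {x : ℝ} (hx : 0 < x) (n : ℕ) :
    HasDerivAt (gSeq n) (hSeq n x) x := by
  have h2 : HasDerivAt (fun y : ℝ => ∑ m ∈ Finset.range (n + 1), (y + m)⁻¹)
      (∑ m ∈ Finset.range (n + 1), -((x + m) ^ 2)⁻¹) x := by
    apply HasDerivAt.fun_sum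
    intro m _
    have hne : x + (m : ℝ) ≠ 0 := by positivity
    simpa [neg_div, one_div] using (((hasDerivAt_id x).add_const (m : ℝ)).fun_inv hne)
  have := (hasDerivAt_const x (Real.log n)).fun_sub h2
  rw [show gSeq n = fun y : ℝ => Real.log n - ∑ m ∈ Finset.range (n + 1), (y + (m : ℝ))⁻¹ from rfl]
  simpa [gSeq, hSeq, Finset.sum_neg_distrib] using this

/-- summand for the digamma series -/
noncomputable def u (i : ℕ) (x : ℝ) : ℝ :=
  Real.log ((i : ℝ) + 1) - Real.log i - (x + i + 1)⁻¹

/-- digamma on `(0,∞)`. -/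
noncomputable def psi (x : ℝ) : ℝ := -x⁻¹ + ∑' i : ℕ, u i x

lemma gSeq_eq (n : ℕ) (x : ℝ) :
    gSeq n x = -x⁻¹ + ∑ i ∈ Finset.range n, u i x := by
  have hlog : ∑ i ∈ Finset.range n, (Real.log ((i : ℝ) + 1) - Real.log i) = Real.log n := by
    have h := Finset.sum_range_sub (fun i : ℕ => Real.log i) n
    push_cast at h
    simpa [Real.log_zero] using h
  have hsum : ∑ m ∈ Finset.range (n + 1), (x + (m : ℝ))⁻¹
      = x⁻¹ + ∑ i ∈ Finset.range n, (x + (i : ℝ) + 1)⁻¹ := by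
    rw [Finset.sum_range_succ']
    rw [Finset.sum_congr rfl (fun i _ => show (x + ((i + 1 : ℕ) : ℝ))⁻¹ = (x + i + 1)⁻¹ by
      push_cast; ring)]
    push_cast
    ring
  rw [gSeq, ← hlog, hsum]
  simp only [u, Finset.sum_sub_distrib]
  ring

lemma summable_inv_sq {a : ℝ} (ha : 0 < a) : Summable fun m : ℕ => ((a + m) ^ 2)⁻¹ := by
  have h := (Real.summable_one_div_nat_add_rpow a 2).mpr one_lt_two
  refine h.congr fun n => ?_
  have hpos : (0 : ℝ) < n + a := by positivity
  rw [show ((2 : ℝ)) = ((2 : ℕ) : ℝ) by norm_num, Real.rpow_natCast, abs_of_pos hpos, one_div,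
    add_comm]

lemma u_nonneg {x : ℝ} (hx : 0 < x) (k : ℕ) : 0 ≤ u (k + 1) x := by
  set i : ℝ := (k : ℝ) + 1 with hi
  have hi1 : (1 : ℝ) ≤ i := by simp [hi]
  have hi0 : (0 : ℝ) < i := by linarith
  have h1 : Real.log (i + 1) - Real.log i = -Real.log (i / (i + 1)) := by
    rw [Real.log_div hi0.ne' (by linarith), neg_sub]
  have h2 : Real.log (i / (i + 1)) ≤ i / (i + 1) - 1 :=
    Real.log_le_sub_one_of_pos (by positivity)
  have h3 : ((x : ℝ) + i + 1)⁻¹ ≤ (i + 1)⁻¹ := by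
    apply inv_anti₀ (by linarith) (by linarith)
  have h4 : 1 - i / (i + 1) = (i + 1)⁻¹ := by field_simp; ring
  have hcast : u (k + 1) x = Real.log (i + 1) - Real.log i - (x + i + 1)⁻¹ := by
    simp only [u, hi]; push_cast; ring_nf
  rw [hcast, h1]
  linarith [h4 ▸ (by linarith [h2] : 1 - i / (i + 1) ≤ -Real.log (i / (i + 1)))]

lemma norm_u_le {a b : ℝ} (ha : 0 < a) (i : ℕ) {x : ℝ} (hx : x ∈ Set.Icc a b) :
    ‖u i x‖ ≤ (2 * (b + 1) + 1) * (((i : ℝ) + 1) ^ 2)⁻¹ := by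
  obtain ⟨hax, hxb⟩ := hx
  have hx0 : 0 < x := lt_of_lt_of_le ha hax
  have hb0 : 0 < b := hx0.trans_le hxb
  cases i with
  | zero =>
      have h0 : u 0 x = -(x + 1)⁻¹ := by simp [u]
      rw [h0, norm_neg, Real.norm_eq_abs, abs_of_nonneg (by positivity)]
      have h1 : (x + 1)⁻¹ ≤ 1 := by rw [inv_le_one_iff₀]; right; linarith
      have h2 : ((2 : ℝ) * (b + 1) + 1) * ((((0 : ℕ) : ℝ) + 1) ^ 2)⁻¹ = 2 * b + 3 := by norm_num; ring
      rw [h2]; linarith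
  | succ k =>
      set i : ℝ := (k : ℝ) + 1 with hidef
      have hi1 : (1 : ℝ) ≤ i := by simp [hidef]
      have hi0 : (0 : ℝ) < i := by linarith
      have hcast : u (k + 1) x = Real.log (i + 1) - Real.log i - (x + i + 1)⁻¹ := by
        simp only [u, hidef]; push_cast; ring_nf
      have hub : u (k + 1) x ≤ i⁻¹ - (b + i + 1)⁻¹ := by
        have h1 : Real.log (i + 1) - Real.log i = Real.log ((i + 1) / i) := by
          rw [Real.log_div (by linarith) hi0.ne']
        have h2 : Real.log ((i + 1) / i) ≤ (i + 1) / i - 1 :=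
          Real.log_le_sub_one_of_pos (by positivity)
        have h3 : (i + 1) / i - 1 = i⁻¹ := by field_simp; ring
        have h4 : (b + i + 1)⁻¹ ≤ (x + i + 1)⁻¹ :=
          inv_anti₀ (by linarith) (by linarith)
        rw [hcast, h1]
        linarith [h3 ▸ h2]
      have hkey : i⁻¹ - (b + i + 1)⁻¹ ≤ (2 * (b + 1) + 1) * ((i + 1) ^ 2)⁻¹ := by
        have e1 : i⁻¹ - (b + i + 1)⁻¹ = (b + 1) / (i * (b + i + 1)) := by
          field_simp
          ring
        have e2 : (2 * (b + 1) + 1) * ((i + 1) ^ 2)⁻¹ = (2 * b + 3) / ((i + 1) ^ 2) := by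
          rw [div_eq_mul_inv]; ring
        rw [e1, e2, div_le_div_iff₀ (by positivity) (by positivity)]
        nlinarith [sq_nonneg (i - 1), mul_pos hi0 hb0, sq_nonneg i]
      rw [Real.norm_eq_abs, abs_of_nonneg (u_nonneg hx0 k)]
      refine le_trans (le_trans hub hkey) (le_of_eq ?_)
      push_cast
      simp only [hidef]

lemma tendstoUniformlyOn_gSeq {a b : ℝ} (ha : 0 < a) :
    TendstoUniformlyOn gSeq psi atTop (Set.Icc a b) := by
  have hs : Summable (fun i : ℕ => (2 * (b + 1) + 1) * (((i : ℝ) + 1) ^ 2)⁻¹) := by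
    have h1 : Summable fun m : ℕ => (((1 : ℝ) + m) ^ 2)⁻¹ := summable_inv_sq one_pos
    exact (h1.congr fun n => by rw [add_comm]).mul_left _
  have hU : TendstoUniformlyOn (fun n x => ∑ i ∈ Finset.range n, u i x)
      (fun x => ∑' i, u i x) atTop (Set.Icc a b) :=
    tendstoUniformlyOn_tsum_nat hs fun i x hx => norm_u_le ha i hx
  rw [Metric.tendstoUniformlyOn_iff] at hU ⊢
  intro ε hε
  filter_upwards [hU ε hε] with n hn x hx
  have h := hn x hx
  rw [dist_eq_norm] at h ⊢
  rw [psi, gSeq_eq]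
  simpa using h

lemma tendstoUniformlyOn_hSeq {a b : ℝ} (ha : 0 < a) :
    TendstoUniformlyOn hSeq psi1 atTop (Set.Icc a b) := by
  have base : TendstoUniformlyOn (fun n (x : ℝ) => ∑ m ∈ Finset.range n, ((x + m) ^ 2)⁻¹)
      psi1 atTop (Set.Icc a b) := by
    apply tendstoUniformlyOn_tsum_nat (summable_inv_sq ha)
    intro m x hx
    rw [Real.norm_eq_abs, abs_of_nonneg (by positivity)]
    apply inv_anti₀ (by positivity)
    have : a ≤ x := hx.1
    nlinarith [hx.1, ha.le, (Nat.cast_nonneg m : (0:ℝ) ≤ m)]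
  intro v hv
  exact (tendsto_add_atTop_nat 1).eventually (base v hv)

lemma tlu_gSeq : TendstoLocallyUniformlyOn gSeq psi atTop (Set.Ioi 0) := by
  rw [tendstoLocallyUniformlyOn_iff_forall_isCompact isOpen_Ioi]
  intro K hK hKc
  rcases K.eq_empty_or_nonempty with rfl | hne
  · exact tendstoUniformlyOn_empty
  · obtain ⟨a, haK, haL⟩ := hKc.exists_isLeast hne
    obtain ⟨b, hbK, hbG⟩ := hKc.exists_isGreatest hne
    exact (tendstoUniformlyOn_gSeq (hK haK)).mono fun x hx => ⟨haL hx, hbG hx⟩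

lemma tlu_hSeq : TendstoLocallyUniformlyOn hSeq psi1 atTop (Set.Ioi 0) := by
  rw [tendstoLocallyUniformlyOn_iff_forall_isCompact isOpen_Ioi]
  intro K hK hKc
  rcases K.eq_empty_or_nonempty with rfl | hne
  · exact tendstoUniformlyOn_empty
  · obtain ⟨a, haK, haL⟩ := hKc.exists_isLeast hne
    obtain ⟨b, hbK, hbG⟩ := hKc.exists_isGreatest hne
    exact (tendstoUniformlyOn_hSeq (hK haK)).mono fun x hx => ⟨haL hx, hbG hx⟩

lemma psi_hasDeriv {x : ℝ} (hx : 0 < x) :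
    HasDerivAt (fun y => Real.log (Real.Gamma y)) (psi x) x := by
  apply hasDerivAt_of_tendstoLocallyUniformlyOn isOpen_Ioi tlu_gSeq
    (Filter.Eventually.of_forall fun n y hy => hasDerivAt_logGammaSeq hy n)
    (fun y hy => Real.BohrMollerup.tendsto_log_gamma hy) hx

lemma psi1_hasDeriv {x : ℝ} (hx : 0 < x) : HasDerivAt psi (psi1 x) x := by
  apply hasDerivAt_of_tendstoLocallyUniformlyOn isOpen_Ioi tlu_hSeq
    (Filter.Eventually.of_forall fun n y hy => hasDerivAt_gSeq hy n)
    (fun y hy => tlu_gSeq.tendsto_at hy) hx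

lemma trigamma_eq {x : ℝ} (hx : 0 < x) : trigamma x = psi1 x := by
  have h1 : deriv (fun y => Real.log (Real.Gamma y)) =ᶠ[nhds x] psi := by
    filter_upwards [isOpen_Ioi.mem_nhds (Set.mem_Ioi.mpr hx)] with y hy
    exact (psi_hasDeriv hy).deriv
  rw [trigamma, h1.deriv_eq, (psi1_hasDeriv hx).deriv]

lemma psi1_le {x : ℝ} (hx : 2 ≤ x) : psi1 x ≤ (x - 1/2)⁻¹ := by
  apply Real.tsum_le_of_sum_range_le (fun n => by positivity)
  intro N
  have hstep : ∀ m ∈ Finset.range N, ((x + (m : ℝ)) ^ 2)⁻¹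
      ≤ (x + (m : ℝ) - 1/2)⁻¹ - (x + ((m + 1 : ℕ) : ℝ) - 1/2)⁻¹ := by
    intro m _
    have hm : (0 : ℝ) ≤ m := Nat.cast_nonneg m
    have h1 : (0 : ℝ) < x + m - 1/2 := by linarith
    have h2 : (0 : ℝ) < x + m + 1/2 := by linarith
    have h2' : (0 : ℝ) < x + (m : ℝ) + 1 - 1/2 := by linarith
    have e : (x + (m : ℝ) - 1/2)⁻¹ - (x + ((m + 1 : ℕ) : ℝ) - 1/2)⁻¹
        = ((x + m - 1/2) * (x + m + 1/2))⁻¹ := by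
      push_cast
      rw [show x + ((m : ℝ) + 1) - 1/2 = x + (m : ℝ) + 1 - 1/2 by ring,
        inv_sub_inv h1.ne' h2'.ne',
        show x + (m : ℝ) + 1 - 1/2 - (x + m - 1/2) = 1 by ring, one_div]
      congr 1
      ring
    rw [e]
    exact inv_anti₀ (by positivity) (by nlinarith)
  calc ∑ m ∈ Finset.range N, ((x + (m : ℝ)) ^ 2)⁻¹
      ≤ ∑ m ∈ Finset.range N,
        ((x + (m : ℝ) - 1/2)⁻¹ - (x + ((m + 1 : ℕ) : ℝ) - 1/2)⁻¹) := Finset.sum_le_sum hstep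
    _ = (x + ((0 : ℕ) : ℝ) - 1/2)⁻¹ - (x + (N : ℝ) - 1/2)⁻¹ :=
        Finset.sum_range_sub' (fun m : ℕ => (x + (m : ℝ) - 1/2)⁻¹) N
    _ ≤ (x - 1/2)⁻¹ := by
        have hN : (0 : ℝ) ≤ N := Nat.cast_nonneg N
        have h5 : (0 : ℝ) ≤ (x + (N : ℝ) - 1/2)⁻¹ := inv_nonneg.mpr (by linarith)
        simp only [Nat.cast_zero, add_zero]
        linarith

lemma le_psi1 {x : ℝ} (hx : 2 ≤ x) : (x - 1/2)⁻¹ - (x * (x - 1) ^ 2)⁻¹ ≤ psi1 x := by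
  have hx0 : (0 : ℝ) < x := by linarith
  have hsum : Summable fun m : ℕ => ((x + (m : ℝ)) ^ 2)⁻¹ := summable_inv_sq hx0
  set C : ℝ := ((x - 1) * x)⁻¹ with hC
  have hx1 : (0 : ℝ) < x - 1 := by linarith
  have hCpos : 0 < C := by rw [hC]; positivity
  have term : ∀ m : ℕ, (x + (m : ℝ) - 1/2)⁻¹ - (x + ((m + 1 : ℕ) : ℝ) - 1/2)⁻¹
      - C * ((x + (m : ℝ) - 1)⁻¹ - (x + ((m + 1 : ℕ) : ℝ) - 1)⁻¹) ≤ ((x + (m : ℝ)) ^ 2)⁻¹ := by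
    intro m
    have hm : (0 : ℝ) ≤ m := Nat.cast_nonneg m
    have h1 : (0 : ℝ) < x + m - 1/2 := by linarith
    have h2 : (0 : ℝ) < x + m + 1/2 := by linarith
    have h2' : (0 : ℝ) < x + (m : ℝ) + 1 - 1/2 := by linarith
    have h3 : (0 : ℝ) < x + m - 1 := by linarith
    have h4 : (0 : ℝ) < x + m := by linarith
    have h4' : (0 : ℝ) < x + (m : ℝ) + 1 - 1 := by linarith
    have e1 : (x + (m : ℝ) - 1/2)⁻¹ - (x + ((m + 1 : ℕ) : ℝ) - 1/2)⁻¹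
        = ((x + m - 1/2) * (x + m + 1/2))⁻¹ := by
      push_cast
      rw [show x + ((m : ℝ) + 1) - 1/2 = x + (m : ℝ) + 1 - 1/2 by ring,
        inv_sub_inv h1.ne' h2'.ne',
        show x + (m : ℝ) + 1 - 1/2 - (x + m - 1/2) = 1 by ring, one_div]
      congr 1
      ring
    have e2 : (x + (m : ℝ) - 1)⁻¹ - (x + ((m + 1 : ℕ) : ℝ) - 1)⁻¹
        = ((x + m - 1) * (x + m))⁻¹ := by
      push_cast
      rw [show x + ((m : ℝ) + 1) - 1 = x + (m : ℝ) + 1 - 1 by ring,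
        inv_sub_inv h3.ne' h4'.ne',
        show x + (m : ℝ) + 1 - 1 - (x + m - 1) = 1 by ring, one_div]
      congr 1
      ring
    rw [e1, e2]
    have hDpos : (0 : ℝ) < (x + m - 1/2) * (x + m + 1/2) := by positivity
    have hSpos : (0 : ℝ) < (x + (m : ℝ)) ^ 2 := by positivity
    have egap : ((x + m - 1/2) * (x + m + 1/2))⁻¹ - ((x + (m : ℝ)) ^ 2)⁻¹
        = (1/4) * (((x + m - 1/2) * (x + m + 1/2)) * (x + m) ^ 2)⁻¹ := by
      rw [inv_sub_inv hDpos.ne' hSpos.ne',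
        show (x + (m : ℝ)) ^ 2 - (x + m - 1/2) * (x + m + 1/2) = 1/4 by ring,
        div_eq_mul_inv]
    have hmono : (x - 1) * x * ((x + m - 1) * (x + m))
        ≤ ((x + m - 1/2) * (x + m + 1/2)) * (x + m) ^ 2 := by
      have hA : (x - 1) * x ≤ (x + m - 1) * (x + m) := by nlinarith
      have hB : (x + m - 1) * (x + m) ≤ (x + m - 1/2) * (x + m + 1/2) := by nlinarith
      have hc : (x + m - 1) * (x + m) ≤ (x + m) ^ 2 := by nlinarith
      have p1 : (0 : ℝ) ≤ (x + m - 1) * (x + m) := (mul_pos h3 h4).le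
      nlinarith [mul_le_mul hA hc p1 (by positivity), mul_le_mul hB le_rfl (le_of_lt (by positivity)) (by positivity)]
    have hgap2 : (1/4) * (((x + m - 1/2) * (x + m + 1/2)) * (x + m) ^ 2)⁻¹
        ≤ C * ((x + m - 1) * (x + m))⁻¹ := by
      rw [hC, ← mul_inv]
      have hq := inv_anti₀ (by positivity : (0:ℝ) < (x - 1) * x * ((x + m - 1) * (x + m))) hmono
      have hnn : (0:ℝ) ≤ (((x + m - 1/2) * (x + m + 1/2)) * (x + m) ^ 2)⁻¹ := by positivity
      linarith
    linarith
  have key : ∀ N : ℕ, (x - 1/2)⁻¹ - (x + (N : ℝ) - 1/2)⁻¹ - C * (x - 1)⁻¹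
      ≤ ∑ m ∈ Finset.range N, ((x + (m : ℝ)) ^ 2)⁻¹ := by
    intro N
    have hN : (0 : ℝ) ≤ N := Nat.cast_nonneg N
    have t1 : ∑ m ∈ Finset.range N,
        ((x + (m : ℝ) - 1/2)⁻¹ - (x + ((m + 1 : ℕ) : ℝ) - 1/2)⁻¹)
        = (x + ((0 : ℕ) : ℝ) - 1/2)⁻¹ - (x + (N : ℝ) - 1/2)⁻¹ :=
      Finset.sum_range_sub' (fun m : ℕ => (x + (m : ℝ) - 1/2)⁻¹) N
    have t2 : ∑ m ∈ Finset.range N,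
        ((x + (m : ℝ) - 1)⁻¹ - (x + ((m + 1 : ℕ) : ℝ) - 1)⁻¹)
        = (x + ((0 : ℕ) : ℝ) - 1)⁻¹ - (x + (N : ℝ) - 1)⁻¹ :=
      Finset.sum_range_sub' (fun m : ℕ => (x + (m : ℝ) - 1)⁻¹) N
    have hsle : ∑ m ∈ Finset.range N,
        ((x + (m : ℝ) - 1/2)⁻¹ - (x + ((m + 1 : ℕ) : ℝ) - 1/2)⁻¹
          - C * ((x + (m : ℝ) - 1)⁻¹ - (x + ((m + 1 : ℕ) : ℝ) - 1)⁻¹))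
        ≤ ∑ m ∈ Finset.range N, ((x + (m : ℝ)) ^ 2)⁻¹ :=
      Finset.sum_le_sum fun m _ => term m
    rw [Finset.sum_sub_distrib, ← Finset.mul_sum, t1, t2] at hsle
    simp only [Nat.cast_zero, add_zero] at hsle
    have hexp : C * ((x - 1)⁻¹ - (x + (N : ℝ) - 1)⁻¹)
        = C * (x - 1)⁻¹ - C * (x + (N : ℝ) - 1)⁻¹ := by ring
    rw [hexp] at hsle
    have hinv1 : (0 : ℝ) ≤ (x + (N : ℝ) - 1)⁻¹ := inv_nonneg.mpr (by linarith)
    linarith [mul_nonneg hCpos.le hinv1]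
  have hlim : Filter.Tendsto
      (fun N : ℕ => (x - 1/2)⁻¹ - (x + (N : ℝ) - 1/2)⁻¹ - C * (x - 1)⁻¹) atTop
      (nhds ((x - 1/2)⁻¹ - 0 - C * (x - 1)⁻¹)) := by
    refine (tendsto_const_nhds.sub ?_).sub tendsto_const_nhds
    have h1 : Filter.Tendsto (fun N : ℕ => x + (N : ℝ) - 1/2) atTop atTop := by
      have := tendsto_atTop_add_const_right atTop (x - 1/2) tendsto_natCast_atTop_atTop
      exact this.congr fun N => by ring
    exact tendsto_inv_atTop_zero.comp h1
  have hle : (x - 1/2)⁻¹ - 0 - C * (x - 1)⁻¹ ≤ psi1 x := by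
    apply le_of_tendsto' hlim
    intro N
    exact le_trans (key N) (Summable.sum_le_tsum _ (fun m _ => by positivity) hsum)
  have hCeq : C * (x - 1)⁻¹ = (x * (x - 1) ^ 2)⁻¹ := by
    rw [hC, ← mul_inv]
    congr 1
    ring
  rw [← hCeq]
  linarith

lemma tendsto_main (p : ℝ) (hp : 0 < p) :
    Filter.Tendsto
      (fun N : ℝ => N ^ 2 * (((N - p - 1) / 2 - 1/2)⁻¹ - ((N - 1) / 2 - 1/2)⁻¹))
      atTop (nhds (2 * p)) := by
  have h1 : Filter.Tendsto (fun N : ℝ => (p + 2) / N) atTop (nhds 0) :=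
    tendsto_const_nhds.div_atTop tendsto_id
  have h2 : Filter.Tendsto (fun N : ℝ => (2 : ℝ) / N) atTop (nhds 0) :=
    tendsto_const_nhds.div_atTop tendsto_id
  have h3 : Filter.Tendsto
      (fun N : ℝ => (2 * p) * ((1 - (p + 2) / N) * (1 - 2 / N))⁻¹) atTop (nhds (2 * p)) := by
    have hprod : Filter.Tendsto (fun N : ℝ => (1 - (p + 2) / N) * (1 - 2 / N)) atTop
        (nhds ((1 - 0) * (1 - 0))) := (tendsto_const_nhds.sub h1).mul (tendsto_const_nhds.sub h2)
    have := (hprod.inv₀ (by norm_num)).const_mul (2 * p)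
    simpa using this
  apply h3.congr'
  filter_upwards [eventually_gt_atTop (p + 2), eventually_gt_atTop 2] with N hN1 hN2
  have hN0 : (0 : ℝ) < N := by linarith
  have d0 : N ≠ 0 := hN0.ne'
  have d1 : N - p - 2 ≠ 0 := by intro h; apply absurd hN1; linarith
  have d2 : N - 2 ≠ 0 := by intro h; apply absurd hN2; linarith
  have e1 : (N - p - 1) / 2 - 1/2 = (N - p - 2) / 2 := by ring
  have e2 : (N - 1) / 2 - 1/2 = (N - 2) / 2 := by ring
  rw [e1, e2, show 1 - (p + 2) / N = (N - p - 2) / N by field_simp; ring,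
    show 1 - 2 / N = (N - 2) / N by field_simp]
  rw [div_mul_div_comm, inv_div, inv_div, inv_div]
  rw [div_sub_div _ _ d1 d2, mul_div_assoc', mul_div_assoc']
  rw [div_eq_div_iff (mul_ne_zero d1 d2) (mul_ne_zero d1 d2)]
  ring

lemma tendsto_err (q : ℝ) :
    Filter.Tendsto
      (fun N : ℝ => N ^ 2 * ((N - q) / 2 * ((N - q) / 2 - 1) ^ 2)⁻¹) atTop (nhds 0) := by
  have h1 : Filter.Tendsto (fun N : ℝ => q / N) atTop (nhds 0) :=
    tendsto_const_nhds.div_atTop tendsto_id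
  have h2 : Filter.Tendsto (fun N : ℝ => (q + 2) / N) atTop (nhds 0) :=
    tendsto_const_nhds.div_atTop tendsto_id
  have h8 : Filter.Tendsto (fun N : ℝ => (8 : ℝ) / N) atTop (nhds 0) :=
    tendsto_const_nhds.div_atTop tendsto_id
  have h3 : Filter.Tendsto
      (fun N : ℝ => (8 / N) * ((1 - q / N) * (1 - (q + 2) / N) ^ 2)⁻¹) atTop (nhds 0) := by
    have hprod : Filter.Tendsto (fun N : ℝ => (1 - q / N) * (1 - (q + 2) / N) ^ 2) atTop
        (nhds ((1 - 0) * (1 - 0) ^ 2)) :=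
      (tendsto_const_nhds.sub h1).mul ((tendsto_const_nhds.sub h2).pow 2)
    have := h8.mul (hprod.inv₀ (by norm_num))
    simpa using this
  apply h3.congr'
  filter_upwards [eventually_gt_atTop (q + 2), eventually_gt_atTop 0] with N hN1 hN0
  have d0 : N ≠ 0 := hN0.ne'
  have d1 : N - q ≠ 0 := by intro h; apply absurd hN1; linarith
  have d2 : N - q - 2 ≠ 0 := by intro h; apply absurd hN1; linarith
  have e1 : (N - q) / 2 - 1 = (N - q - 2) / 2 := by ring
  rw [e1, show 1 - q / N = (N - q) / N by field_simp,
    show 1 - (q + 2) / N = (N - q - 2) / N by field_simp; ring]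
  have dA : N * ((N - q) * (N - q - 2) ^ 2) ≠ 0 :=
    mul_ne_zero d0 (mul_ne_zero d1 (pow_ne_zero 2 d2))
  have dB : (N - q) * (N - q - 2) ^ 2 ≠ 0 := mul_ne_zero d1 (pow_ne_zero 2 d2)
  rw [div_pow, div_pow, div_mul_div_comm, div_mul_div_comm, inv_div, inv_div,
    div_mul_div_comm, mul_div_assoc']
  rw [div_eq_div_iff dA dB]
  ring

end TrigammaAux

theorem stmt_11 (p : ℝ) (hp : 0 < p) :
    Tendsto
      (fun N : ℝ => N ^ 2 * (trigamma ((N - p - 1) / 2) - trigamma ((N - 1) / 2)))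
      atTop (nhds (2 * p)) := by
  open TrigammaAux in
  have hmain := TrigammaAux.tendsto_main p hp
  have herrA : Filter.Tendsto
      (fun N : ℝ => N ^ 2 * ((N - p - 1) / 2 * ((N - p - 1) / 2 - 1) ^ 2)⁻¹)
      atTop (nhds 0) :=
    (TrigammaAux.tendsto_err (p + 1)).congr fun N => by ring_nf
  have herrB : Filter.Tendsto
      (fun N : ℝ => N ^ 2 * ((N - 1) / 2 * ((N - 1) / 2 - 1) ^ 2)⁻¹)
      atTop (nhds 0) := TrigammaAux.tendsto_err 1
  have hlo : Filter.Tendsto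
      (fun N : ℝ => N ^ 2 * (((N - p - 1) / 2 - 1/2)⁻¹ - ((N - 1) / 2 - 1/2)⁻¹)
        - N ^ 2 * ((N - p - 1) / 2 * ((N - p - 1) / 2 - 1) ^ 2)⁻¹)
      atTop (nhds (2 * p)) := by simpa using hmain.sub herrA
  have hhi : Filter.Tendsto
      (fun N : ℝ => N ^ 2 * (((N - p - 1) / 2 - 1/2)⁻¹ - ((N - 1) / 2 - 1/2)⁻¹)
        + N ^ 2 * ((N - 1) / 2 * ((N - 1) / 2 - 1) ^ 2)⁻¹)
      atTop (nhds (2 * p)) := by simpa using hmain.add herrB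
  refine tendsto_of_tendsto_of_tendsto_of_le_of_le' hlo hhi ?_ ?_
  · filter_upwards [eventually_ge_atTop (p + 6), eventually_ge_atTop 6] with N hN1 hN2
    have ha2 : (2 : ℝ) ≤ (N - p - 1) / 2 := by linarith
    have hb2 : (2 : ℝ) ≤ (N - 1) / 2 := by linarith
    have hN2' : (0 : ℝ) ≤ N ^ 2 := sq_nonneg N
    rw [TrigammaAux.trigamma_eq (by linarith : (0:ℝ) < (N - p - 1) / 2),
      TrigammaAux.trigamma_eq (by linarith : (0:ℝ) < (N - 1) / 2)]
    have h1 := TrigammaAux.le_psi1 ha2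
    have h2 := TrigammaAux.psi1_le hb2
    have hD : ((N - p - 1) / 2 - 1/2)⁻¹ - ((N - p - 1) / 2 * ((N - p - 1) / 2 - 1) ^ 2)⁻¹
        - ((N - 1) / 2 - 1/2)⁻¹
        ≤ TrigammaAux.psi1 ((N - p - 1) / 2) - TrigammaAux.psi1 ((N - 1) / 2) := by
      linarith
    calc N ^ 2 * (((N - p - 1) / 2 - 1/2)⁻¹ - ((N - 1) / 2 - 1/2)⁻¹)
          - N ^ 2 * ((N - p - 1) / 2 * ((N - p - 1) / 2 - 1) ^ 2)⁻¹
        = N ^ 2 * (((N - p - 1) / 2 - 1/2)⁻¹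
            - ((N - p - 1) / 2 * ((N - p - 1) / 2 - 1) ^ 2)⁻¹
            - ((N - 1) / 2 - 1/2)⁻¹) := by ring
      _ ≤ N ^ 2 * (TrigammaAux.psi1 ((N - p - 1) / 2) - TrigammaAux.psi1 ((N - 1) / 2)) :=
          mul_le_mul_of_nonneg_left hD hN2'
  · filter_upwards [eventually_ge_atTop (p + 6), eventually_ge_atTop 6] with N hN1 hN2
    have ha2 : (2 : ℝ) ≤ (N - p - 1) / 2 := by linarith
    have hb2 : (2 : ℝ) ≤ (N - 1) / 2 := by linarith
    have hN2' : (0 : ℝ) ≤ N ^ 2 := sq_nonneg N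
    rw [TrigammaAux.trigamma_eq (by linarith : (0:ℝ) < (N - p - 1) / 2),
      TrigammaAux.trigamma_eq (by linarith : (0:ℝ) < (N - 1) / 2)]
    have h1 := TrigammaAux.psi1_le ha2
    have h2 := TrigammaAux.le_psi1 hb2
    have hD : TrigammaAux.psi1 ((N - p - 1) / 2) - TrigammaAux.psi1 ((N - 1) / 2)
        ≤ ((N - p - 1) / 2 - 1/2)⁻¹ - ((N - 1) / 2 - 1/2)⁻¹
          + ((N - 1) / 2 * ((N - 1) / 2 - 1) ^ 2)⁻¹ := by
      linarith
    calc N ^ 2 * (TrigammaAux.psi1 ((N - p - 1) / 2) - TrigammaAux.psi1 ((N - 1) / 2))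
        ≤ N ^ 2 * (((N - p - 1) / 2 - 1/2)⁻¹ - ((N - 1) / 2 - 1/2)⁻¹
            + ((N - 1) / 2 * ((N - 1) / 2 - 1) ^ 2)⁻¹) :=
          mul_le_mul_of_nonneg_left hD hN2'
      _ = N ^ 2 * (((N - p - 1) / 2 - 1/2)⁻¹ - ((N - 1) / 2 - 1/2)⁻¹)
          + N ^ 2 * ((N - 1) / 2 * ((N - 1) / 2 - 1) ^ 2)⁻¹ := by ring
end

section
/- For every fixed real p > 0, the quantity N^2 · [ (ψ((N−1)/2) − ψ((N−p−1)/2))^2 − (ψ′((N−1)/2) − ψ′((N−p−1)/2)) ] tends to p(p+2) as the real number N tends to infinity. -/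
open Filter

open Real Set Finset Topology

section prelim

lemma hderGamma {x : ℝ} (hx : 0 < x) :
    DifferentiableAt ℝ (fun y => Real.log (Real.Gamma y)) x := by
  exact (Real.differentiableAt_Gamma (fun m => (lt_of_le_of_lt (neg_nonpos.2 m.cast_nonneg) hx).ne')).log
    (Real.Gamma_pos_of_pos hx).ne'

lemma logGamma_rec {x : ℝ} (hx : 0 < x) :
    Real.log (Real.Gamma (x + 1)) = Real.log (Real.Gamma x) + Real.log x := by
  rw [Real.Gamma_add_one hx.ne', Real.log_mul hx.ne' (Real.Gamma_pos_of_pos hx).ne', add_comm]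

lemma digamma_rec {x : ℝ} (hx : 0 < x) : digamma (x + 1) = digamma x + 1 / x := by
  unfold digamma
  rw [← deriv_comp_add_const (fun y => Real.log (Real.Gamma y)) 1, one_div, ← Real.deriv_log,
    ← deriv_add (hderGamma hx) (Real.differentiableAt_log hx.ne')]
  apply Filter.EventuallyEq.deriv_eq
  filter_upwards [eventually_gt_nhds hx] with y hy
  exact logGamma_rec hy

lemma digamma_add_nat {x : ℝ} (hx : 0 < x) (n : ℕ) :
    digamma (x + n) = digamma x + ∑ k ∈ Finset.range n, 1 / (x + k) := by
  induction n with
  | zero => simp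
  | succ n ih =>
    have h1 : (0:ℝ) < x + n := by positivity
    have : x + (n+1 : ℕ) = (x + n) + 1 := by push_cast; ring
    rw [this, digamma_rec h1, ih, Finset.sum_range_succ]
    ring

lemma digamma_le_log {y : ℝ} (hy : 1 < y) : digamma y ≤ Real.log y := by
  have hy0 : (0:ℝ) < y := by linarith
  have := Real.convexOn_log_Gamma.deriv_le_slope (Set.mem_Ioi.2 hy0)
    (Set.mem_Ioi.2 (by linarith : (0:ℝ) < y + 1)) (by linarith) (hderGamma hy0)
  refine le_trans this (le_of_eq ?_)
  rw [slope_def_field, Function.comp_apply, Function.comp_apply, logGamma_rec hy0]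
  field_simp
  ring

lemma log_le_digamma {y : ℝ} (hy : 1 < y) : Real.log (y - 1) ≤ digamma y := by
  have hy1 : (0:ℝ) < y - 1 := by linarith
  have hy0 : (0:ℝ) < y := by linarith
  have := Real.convexOn_log_Gamma.slope_le_deriv (Set.mem_Ioi.2 hy1)
    (Set.mem_Ioi.2 hy0) (by linarith) (hderGamma hy0)
  refine le_trans (le_of_eq ?_) this
  rw [slope_def_field, Function.comp_apply, Function.comp_apply]
  have : Real.log (Real.Gamma y) = Real.log (Real.Gamma (y-1)) + Real.log (y-1) := by
    have := logGamma_rec hy1; rw [sub_add_cancel] at this; exact this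
  rw [this]
  field_simp
  ring

lemma hasSum_telescope_real (g : ℕ → ℝ) (hmono : ∀ n, g (n + 1) ≤ g n)
    (hlim : Tendsto g atTop (𝓝 0)) : HasSum (fun n => g n - g (n + 1)) (g 0) := by
  rw [hasSum_iff_tendsto_nat_of_nonneg (fun n => sub_nonneg.2 (hmono n))]
  have : (fun n : ℕ => ∑ i ∈ Finset.range n, (g i - g (i + 1))) = fun n => g 0 - g n := by
    funext n; exact Finset.sum_range_sub' g n
  rw [this]
  simpa using tendsto_const_nhds.sub hlim

end prelim

section chunk2
variable {x : ℝ}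

lemma summable_one_div_nat_succ_sq : Summable (fun n : ℕ => 1 / ((n : ℝ) + 1) ^ 2) := by
  have := (summable_nat_add_iff 1).mpr (Real.summable_one_div_nat_pow.mpr one_lt_two)
  simpa using this

lemma base_bound (hx : 0 < x) (n : ℕ) : min x 1 * ((n : ℝ) + 1) ≤ x + n := by
  have h1 : min x 1 ≤ x := min_le_left _ _
  have h2 : min x 1 ≤ 1 := min_le_right _ _
  have h3 : (0:ℝ) ≤ n := n.cast_nonneg
  nlinarith

lemma summable_sq_shift (hx : 0 < x) : Summable (fun n : ℕ => 1 / (x + n) ^ 2) := by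
  have hc : 0 < min x 1 := lt_min hx one_pos
  have hsum : Summable (fun n : ℕ => (1 / min x 1 ^ 2) * (1 / ((n:ℝ)+1)^2)) :=
    summable_one_div_nat_succ_sq.mul_left _
  refine Summable.of_nonneg_of_le (fun n => by positivity) (fun n => ?_) hsum
  have hb := base_bound hx n
  have h1 : (0:ℝ) < (n:ℝ) + 1 := by positivity
  have h2 : (0:ℝ) < x + n := by positivity
  rw [div_mul_div_comm, one_mul, div_le_div_iff₀ (by positivity) (by positivity)]
  nlinarith [mul_le_mul hb hb (by positivity : (0:ℝ) ≤ min x 1 * ((n:ℝ)+1)) h2.le]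

lemma summable_digamma_term (hx : 0 < x) :
    Summable (fun n : ℕ => 1 / ((n : ℝ) + 1) - 1 / (x + n)) := by
  have hc : 0 < min x 1 := lt_min hx one_pos
  have hsum : Summable (fun n : ℕ => (|x - 1| / min x 1) * (1 / ((n:ℝ)+1)^2)) :=
    summable_one_div_nat_succ_sq.mul_left _
  refine Summable.of_norm_bounded hsum (fun n => ?_)
  have h1 : (0:ℝ) < (n:ℝ) + 1 := by positivity
  have h2 : (0:ℝ) < x + n := by positivity
  have hb := base_bound hx n
  have key : 1 / ((n : ℝ) + 1) - 1 / (x + n) = (x - 1) / (((n:ℝ)+1) * (x + n)) := by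
    field_simp; ring
  rw [Real.norm_eq_abs, key, abs_div, abs_of_pos (by positivity : (0:ℝ) < ((n:ℝ)+1)*(x+n)),
    div_mul_div_comm, mul_one, div_le_div_iff₀ (by positivity) (by positivity)]
  have h3 : min x 1 * ((n:ℝ)+1) * ((n:ℝ)+1) ≤ (x + n) * ((n:ℝ)+1) :=
    mul_le_mul_of_nonneg_right hb h1.le
  nlinarith [mul_le_mul_of_nonneg_left h3 (abs_nonneg (x-1))]

end chunk2

section chunk3
variable {x : ℝ}

noncomputable def psiAux (x : ℝ) : ℝ := ∑' n : ℕ, (1 / ((n:ℝ) + 1) - 1 / (x + n))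

lemma harmonic_cast_eq (n : ℕ) : ((harmonic n : ℚ) : ℝ) = ∑ k ∈ Finset.range n, 1/((k:ℝ)+1) := by
  rw [harmonic]
  push_cast
  simp [one_div]

lemma tendsto_nat_cast_add_atTop (c : ℝ) : Tendsto (fun n : ℕ => c + (n:ℝ)) atTop atTop :=
  tendsto_atTop_add_const_left _ _ tendsto_natCast_atTop_atTop

lemma digamma_eq_s12 (hx : 0 < x) :
    digamma x = -Real.eulerMascheroniConstant + psiAux x := by
  have hconst : ∀ n : ℕ, digamma (x + n) - ∑ k ∈ Finset.range n, 1/(x+(k:ℝ)) = digamma x := by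
    intro n; rw [digamma_add_nat hx n]; ring
  -- the four pieces
  have ht1 : Tendsto (fun n : ℕ => digamma (x + n) - Real.log (x + n)) atTop (𝓝 0) := by
    have hlow : Tendsto (fun n : ℕ => -Real.log (1 + 1/(x + (n:ℝ) - 1))) atTop (𝓝 0) := by
      have h1 : Tendsto (fun n : ℕ => 1 + 1/(x + (n:ℝ) - 1)) atTop (𝓝 1) := by
        have : Tendsto (fun n : ℕ => x + (n:ℝ) - 1) atTop atTop :=
          tendsto_atTop_add_const_right _ _ (tendsto_nat_cast_add_atTop x)
        simpa using (tendsto_const_nhds (x := (1:ℝ))).add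
          ((tendsto_inv_atTop_zero.comp this).congr (fun n => by simp [one_div]))
      have := ((Real.continuousAt_log one_ne_zero).tendsto.comp h1)
      simpa using this.neg
    refine tendsto_of_tendsto_of_tendsto_of_le_of_le' hlow tendsto_const_nhds ?_ ?_
    · filter_upwards [eventually_ge_atTop 1] with n hn
      have hn1 : (1:ℝ) ≤ (n:ℝ) := by exact_mod_cast hn
      have hgt : 1 < x + (n:ℝ) := by linarith
      have hlb := log_le_digamma hgt
      have heq : Real.log (x + (n:ℝ) - 1) - Real.log (x + (n:ℝ)) =
          -Real.log (1 + 1/(x + (n:ℝ) - 1)) := by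
        have h0 : x + (n:ℝ) - 1 ≠ 0 := by linarith
        have hrw : (1:ℝ) + 1/(x + (n:ℝ) - 1) = (x + (n:ℝ))/(x + (n:ℝ) - 1) := by
          rw [add_comm, div_add' _ _ _ h0, div_eq_div_iff h0 h0]; ring
        rw [hrw, Real.log_div (by linarith) (by linarith)]
        ring
      rw [← heq]
      linarith
    · filter_upwards [eventually_ge_atTop 1] with n hn
      have hn1 : (1:ℝ) ≤ (n:ℝ) := by exact_mod_cast hn
      have hgt : 1 < x + (n:ℝ) := by linarith
      linarith [digamma_le_log hgt]
  have ht2 : Tendsto (fun n : ℕ => Real.log (x + n) - Real.log n) atTop (𝓝 0) := by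
    have h1 : Tendsto (fun n : ℕ => 1 + x/(n:ℝ)) atTop (𝓝 1) := by
      simpa using (tendsto_const_nhds (x := (1:ℝ))).add
        (Filter.Tendsto.div_atTop (tendsto_const_nhds (x := x)) tendsto_natCast_atTop_atTop)
    have h2 := (Real.continuousAt_log one_ne_zero).tendsto.comp h1
    simp only [Real.log_one] at h2
    apply h2.congr'
    filter_upwards [eventually_ge_atTop 1] with n hn
    have hn1 : (1:ℝ) ≤ (n:ℝ) := by exact_mod_cast hn
    have hrw : (1:ℝ) + x/(n:ℝ) = (x + (n:ℝ))/(n:ℝ) := by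
      field_simp; ring
    show Real.log (1 + x/(n:ℝ)) = _
    rw [hrw, Real.log_div (by linarith) (by linarith)]
  have ht3 : Tendsto (fun n : ℕ => Real.log n - (harmonic n : ℝ)) atTop
      (𝓝 (-Real.eulerMascheroniConstant)) := by
    simpa using Real.tendsto_harmonic_sub_log.neg.congr (fun n => by ring)
  have ht4 : Tendsto (fun n : ℕ => ∑ k ∈ Finset.range n, (1/((k:ℝ)+1) - 1/(x+(k:ℝ)))) atTop
      (𝓝 (psiAux x)) := (summable_digamma_term hx).hasSum.tendsto_sum_nat
  have hsum := ((ht1.add ht2).add ht3).add ht4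
  simp only [add_zero, zero_add] at hsum
  have hid : ∀ n : ℕ, (digamma (x + n) - Real.log (x + n)) + (Real.log (x + n) - Real.log n)
      + (Real.log n - (harmonic n : ℝ)) + ∑ k ∈ Finset.range n, (1/((k:ℝ)+1) - 1/(x+(k:ℝ)))
      = digamma x := by
    intro n
    rw [Finset.sum_sub_distrib, ← harmonic_cast_eq n, ← hconst n]
    ring
  have : Tendsto (fun _ : ℕ => digamma x) atTop (𝓝 (-Real.eulerMascheroniConstant + psiAux x)) :=
    hsum.congr (fun n => hid n)
  exact tendsto_nhds_unique tendsto_const_nhds this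

end chunk3

section chunk4
variable {x : ℝ}

noncomputable def triAux (x : ℝ) : ℝ := ∑' n : ℕ, 1/(x+(n:ℝ))^2

lemma trigamma_eq (hx : 0 < x) : trigamma x = triAux x := by
  set s : Set ℝ := Set.Ioo (x/2) (x+2) with hs_def
  have hs : IsOpen s := isOpen_Ioo
  have hxs : x ∈ s := ⟨by linarith, by linarith⟩
  have hkey : HasDerivAt psiAux (triAux x) x := by
    apply hasDerivAt_of_tendstoUniformlyOn (l := atTop) (f' := fun m (y:ℝ) =>
        ∑ k ∈ Finset.range m, 1/(y+(k:ℝ))^2)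
      (f := fun m (y:ℝ) => ∑ k ∈ Finset.range m, (1/((k:ℝ)+1) - 1/(y+(k:ℝ)))) hs
    · have := tendstoUniformlyOn_tsum_nat (f := fun (k:ℕ) (y:ℝ) => 1/(y+(k:ℝ))^2)
        (u := fun k : ℕ => 1/(x/2+(k:ℝ))^2) (summable_sq_shift (by linarith)) (s := s) ?_
      · exact this
      · intro k y hy
        have h1 : x/2 < y := hy.1
        have h2 : (0:ℝ) < x/2 + k := by positivity
        have h3 : (0:ℝ) < y + k := by linarith
        rw [Real.norm_eq_abs, abs_of_pos (by positivity)]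
        apply one_div_le_one_div_of_le (by positivity)
        nlinarith
    · filter_upwards with m
      intro y hy
      have hy0 : (0:ℝ) < y := lt_trans (by linarith) hy.1
      apply HasDerivAt.fun_sum
      intro k _
      have h0 : y + (k:ℝ) ≠ 0 := by positivity
      have h := (hasDerivAt_const y (1/((k:ℝ)+1))).sub
        (((hasDerivAt_id y).add_const (k:ℝ)).inv h0)
      simp only [one_div]
      convert h using 1
      · funext z; simp [id_eq]
      · simp only [id_eq]; ring
    · intro y hy
      have hy0 : (0:ℝ) < y := lt_trans (by linarith) hy.1
      exact (summable_digamma_term hy0).hasSum.tendsto_sum_nat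
    · exact hxs
  have heq : digamma =ᶠ[nhds x] (fun y => -Real.eulerMascheroniConstant + psiAux y) := by
    filter_upwards [isOpen_Ioi.mem_nhds (Set.mem_Ioi.2 hx)] with y hy
    exact digamma_eq_s12 hy
  have : trigamma x = deriv digamma x := rfl
  rw [this, heq.deriv_eq]
  exact (hkey.const_add (-Real.eulerMascheroniConstant)).deriv

end chunk4

section chunk5
variable {a b x : ℝ}

lemma tendsto_inv_pow_shift (c : ℝ) (k : ℕ) (hk : k ≠ 0) :
    Tendsto (fun n : ℕ => 1/(c+(n:ℝ))^k) atTop (𝓝 0) := by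
  have h1 : Tendsto (fun n : ℕ => (c+(n:ℝ))^k) atTop atTop :=
    (tendsto_pow_atTop hk).comp (tendsto_nat_cast_add_atTop c)
  simpa [one_div, Function.comp_def] using tendsto_inv_atTop_zero.comp h1

lemma hasSum_inv_telescope (c : ℝ) (hc : 0 < c) :
    HasSum (fun n : ℕ => 1/(c+(n:ℝ)) - 1/(c+(n:ℝ)+1)) (1/c) := by
  have h := hasSum_telescope_real (fun n : ℕ => 1/(c+(n:ℝ))) (fun n => by
      apply one_div_le_one_div_of_le (by positivity)
      push_cast; linarith)
    (by simpa using tendsto_inv_pow_shift c 1 one_ne_zero)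
  simp only [Nat.cast_add, Nat.cast_one, Nat.cast_zero, add_zero] at h
  convert h using 2
  ring

lemma hasSum_inv_cube_telescope (c : ℝ) (hc : 0 < c) :
    HasSum (fun n : ℕ => 1/(c+(n:ℝ))^3 - 1/(c+(n:ℝ)+1)^3) (1/c^3) := by
  have h := hasSum_telescope_real (fun n : ℕ => 1/(c+(n:ℝ))^3) (fun n => by
      apply one_div_le_one_div_of_le (by positivity)
      have h1 : (0:ℝ) ≤ c + (n:ℝ) := by positivity
      have h2 : c + (n:ℝ) ≤ c + ((n:ℕ)+1:ℕ) := by push_cast; linarith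
      exact pow_le_pow_left₀ h1 h2 3)
    (tendsto_inv_pow_shift c 3 three_ne_zero)
  simp only [Nat.cast_add, Nat.cast_one, Nat.cast_zero, add_zero] at h
  convert h using 2 <;> ring

end chunk5

section chunk6
variable {a b x : ℝ}

lemma triAux_le (hx : 1/2 < x) : triAux x ≤ 1/(x - 1/2) := by
  have hx0 : 0 < x := by linarith
  have htel := hasSum_inv_telescope (x - 1/2) (by linarith)
  have heq : ∀ n : ℕ, 1/(x - 1/2 + (n:ℝ)) - 1/(x - 1/2 + (n:ℝ) + 1) =
      1/((x+(n:ℝ)) - 1/2) - 1/((x+(n:ℝ)) + 1/2) := by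
    intro n; congr 2 <;> ring
  rw [triAux, ← htel.tsum_eq]
  refine Summable.tsum_le_tsum (fun n => ?_) (summable_sq_shift hx0) htel.summable
  rw [heq n]
  set z := x + (n:ℝ) with hz
  have hz1 : 1/2 < z := by have : (0:ℝ) ≤ n := n.cast_nonneg; simp [hz]; linarith
  have hd1 : (0:ℝ) < z - 1/2 := by linarith
  have hd2 : (0:ℝ) < z + 1/2 := by linarith
  have hzpos : (0:ℝ) < z := by linarith
  have hrw : 1/(z - 1/2) - 1/(z + 1/2) = 1/(z^2 - 1/4) := by
    rw [div_sub_div _ _ hd1.ne' hd2.ne']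
    congr 1 <;> ring
  rw [hrw]
  apply one_div_le_one_div_of_le (by nlinarith)
  nlinarith

lemma poly_step {z : ℝ} (hz1 : 1 < z) :
    1/4 / (z^2 * (z^2 - 1/4)) ≤ (1/3) * ((3*z^2 - 3*z + 1)/((z-1)^3 * z^3)) := by
  have hzpos : (0:ℝ) < z := by linarith
  have hd3 : (0:ℝ) < z - 1 := by linarith
  have hz2 : (0:ℝ) < z^2 - 1/4 := by nlinarith
  have hzz : (0:ℝ) < z^2 := by positivity
  have hz3 : (0:ℝ) < z^3 := by positivity
  have hA : (0:ℝ) < (z-1) * z^3 := mul_pos hd3 hz3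
  have hB : (0:ℝ) < (z-1)^3 * z^3 := mul_pos (pow_pos hd3 3) hz3
  have h4 : (1/4) / (z^2 * (z^2 - 1/4)) ≤ 1 / ((z-1) * z^3) := by
    rw [div_le_div_iff₀ (mul_pos hzz hz2) hA]
    nlinarith [mul_le_mul_of_nonneg_left hz1.le hzz.le,
      mul_le_mul_of_nonneg_left hz1.le hz3.le]
  refine h4.trans ?_
  rw [mul_div_assoc' (1/3), div_le_div_iff₀ hA hB]
  have f1 : 3*(z-1)^2 ≤ 3*z^2-3*z+1 := by nlinarith
  nlinarith [mul_le_mul_of_nonneg_right f1 hA.le]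

lemma triAux_ge (hx : 1 < x) : 1/(x - 1/2) - (1/3) * (1/(x-1)^3) ≤ triAux x := by
  have hx0 : 0 < x := by linarith
  have htel := hasSum_inv_telescope (x - 1/2) (by linarith)
  have htel3 := hasSum_inv_cube_telescope (x - 1) (by linarith)
  -- the error series
  have hkey : ∀ n : ℕ,
      (1/(x - 1/2 + (n:ℝ)) - 1/(x - 1/2 + (n:ℝ) + 1)) - 1/(x+(n:ℝ))^2 ≤
      (1/3) * (1/(x - 1 + (n:ℝ))^3 - 1/(x - 1 + (n:ℝ) + 1)^3) := by
    intro n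
    set z := x + (n:ℝ) with hz
    have hn0 : (0:ℝ) ≤ n := n.cast_nonneg
    have hz1 : 1 < z := by simp [hz]; linarith
    have hd1 : (0:ℝ) < z - 1/2 := by linarith
    have hd2 : (0:ℝ) < z + 1/2 := by linarith
    have hd3 : (0:ℝ) < z - 1 := by linarith
    have hzpos : (0:ℝ) < z := by linarith
    have e1 : 1/(x - 1/2 + (n:ℝ)) - 1/(x - 1/2 + (n:ℝ) + 1) = 1/(z^2 - 1/4) := by
      rw [show x - 1/2 + (n:ℝ) = z - 1/2 by ring, show z - 1/2 + 1 = z + 1/2 by ring,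
        div_sub_div _ _ hd1.ne' hd2.ne']
      congr 1 <;> ring
    have e2 : 1/(x - 1 + (n:ℝ))^3 - 1/(x - 1 + (n:ℝ) + 1)^3 =
        (3*z^2 - 3*z + 1)/((z-1)^3 * z^3) := by
      rw [show x - 1 + (n:ℝ) = z - 1 by ring, show z - 1 + 1 = z by ring,
        div_sub_div _ _ (by positivity) (by positivity)]
      congr 1 <;> ring
    rw [e1, e2]
    have e3 : 1/(z^2 - 1/4) - 1/z^2 = (1/4) / (z^2 * (z^2 - 1/4)) := by
      rw [div_sub_div _ _ (by nlinarith) (by positivity)]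
      congr 1 <;> ring
    rw [e3]
    exact poly_step hz1
  have hsub : Summable (fun n : ℕ =>
      (1/(x - 1/2 + (n:ℝ)) - 1/(x - 1/2 + (n:ℝ) + 1)) - 1/(x+(n:ℝ))^2) :=
    htel.summable.sub (summable_sq_shift hx0)
  have hle := Summable.tsum_le_tsum hkey hsub (htel3.summable.mul_left (1/3))
  rw [Summable.tsum_sub htel.summable (summable_sq_shift hx0), htel.tsum_eq] at hle
  rw [tsum_mul_left, htel3.tsum_eq] at hle
  have : triAux x = ∑' n : ℕ, 1/(x+(n:ℝ))^2 := rfl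
  linarith

lemma summable_diff_term (hb : 0 < b) (hab : b < a) :
    Summable (fun n : ℕ => 1/(b+(n:ℝ)) - 1/(a+(n:ℝ))) := by
  have := (summable_digamma_term (lt_trans hb hab)).sub (summable_digamma_term hb)
  exact this.congr (fun n => by ring)

lemma digamma_diff (hb : 0 < b) (hab : b < a) :
    digamma a - digamma b = ∑' n : ℕ, (1/(b+(n:ℝ)) - 1/(a+(n:ℝ))) := by
  rw [digamma_eq_s12 (lt_trans hb hab), digamma_eq_s12 hb]
  have : psiAux a - psiAux b =
      ∑' n : ℕ, ((1/((n:ℝ)+1) - 1/(a+(n:ℝ))) - (1/((n:ℝ)+1) - 1/(b+(n:ℝ)))) := by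
    rw [Summable.tsum_sub (summable_digamma_term (lt_trans hb hab)) (summable_digamma_term hb)]
    rfl
  rw [show -Real.eulerMascheroniConstant + psiAux a - (-Real.eulerMascheroniConstant + psiAux b)
    = psiAux a - psiAux b by ring, this]
  exact tsum_congr (fun n => by ring)

lemma digamma_diff_le (hb : 1 < b) (hab : b < a) :
    digamma a - digamma b ≤ (a - b) / (b - 1) := by
  have hb0 : 0 < b := by linarith
  rw [digamma_diff hb0 hab]
  have htel := (hasSum_inv_telescope (b - 1) (by linarith)).mul_left (a - b)
  have hle := Summable.tsum_le_tsum (f := fun n : ℕ => 1/(b+(n:ℝ)) - 1/(a+(n:ℝ))) (fun n => ?_)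
    (summable_diff_term hb0 hab) htel.summable
  · rw [htel.tsum_eq, mul_one_div] at hle
    exact hle
  · have hn0 : (0:ℝ) ≤ n := n.cast_nonneg
    have h1 : (0:ℝ) < b + n := by linarith
    have h2 : (0:ℝ) < a + n := by linarith
    have h3 : (0:ℝ) < b - 1 + n := by linarith
    have e1 : 1/(b+(n:ℝ)) - 1/(a+(n:ℝ)) = (a-b)/((a+(n:ℝ))*(b+(n:ℝ))) := by
      rw [div_sub_div _ _ h1.ne' h2.ne']
      congr 1 <;> ring
    have e2 : 1/(b-1+(n:ℝ)) - 1/(b-1+(n:ℝ)+1) = 1/((b-1+(n:ℝ))*(b+(n:ℝ))) := by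
      rw [div_sub_div _ _ h3.ne' (by linarith : (b-1+(n:ℝ)+1) ≠ 0)]
      congr 1 <;> ring
    show 1/(b+(n:ℝ)) - 1/(a+(n:ℝ)) ≤ (a-b) * (1/(b-1+(n:ℝ)) - 1/(b-1+(n:ℝ)+1))
    rw [e1, e2, mul_one_div]
    rw [div_le_div_iff₀ (by positivity) (by positivity)]
    have key : (b-1+(n:ℝ)) * (b+(n:ℝ)) ≤ (a+(n:ℝ)) * (b+(n:ℝ)) :=
      mul_le_mul_of_nonneg_right (by linarith) h1.le
    exact mul_le_mul_of_nonneg_left key (by linarith)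

lemma digamma_diff_ge (hb : 0 < b) (hab : b < a) :
    (a - b) / a ≤ digamma a - digamma b := by
  have ha0 : 0 < a := lt_trans hb hab
  rw [digamma_diff hb hab]
  have htel := (hasSum_inv_telescope a ha0).mul_left (a - b)
  rw [← mul_one_div, ← htel.tsum_eq]
  refine Summable.tsum_le_tsum (fun n => ?_) htel.summable (summable_diff_term hb hab)
  have hn0 : (0:ℝ) ≤ n := n.cast_nonneg
  have h1 : (0:ℝ) < b + n := by linarith
  have h2 : (0:ℝ) < a + n := by linarith
  have e1 : 1/(b+(n:ℝ)) - 1/(a+(n:ℝ)) = (a-b)/((a+(n:ℝ))*(b+(n:ℝ))) := by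
    rw [div_sub_div _ _ h1.ne' h2.ne']
    congr 1 <;> ring
  have e2 : 1/(a+(n:ℝ)) - 1/(a+(n:ℝ)+1) = 1/((a+(n:ℝ))*(a+(n:ℝ)+1)) := by
    rw [div_sub_div _ _ h2.ne' (by linarith : (a+(n:ℝ)+1) ≠ 0)]
    congr 1 <;> ring
  show (a-b) * (1/(a+(n:ℝ)) - 1/(a+(n:ℝ)+1)) ≤ 1/(b+(n:ℝ)) - 1/(a+(n:ℝ))
  rw [e1, e2, mul_one_div]
  rw [div_le_div_iff₀ (by positivity) (by positivity)]
  have key : (a+(n:ℝ)) * (b+(n:ℝ)) ≤ (a+(n:ℝ)) * (a+(n:ℝ)+1) :=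
    mul_le_mul_of_nonneg_left (by linarith) h2.le
  exact mul_le_mul_of_nonneg_left key (by linarith)

end chunk6

section chunk7

lemma tendsto_sub_const_atTop (c : ℝ) : Tendsto (fun N : ℝ => N - c) atTop atTop := by
  simpa [sub_eq_add_neg] using tendsto_atTop_add_const_right atTop (-c) tendsto_id

lemma tendsto_inv_shift (c : ℝ) : Tendsto (fun N : ℝ => 1/(N-c)) atTop (𝓝 0) :=
  tendsto_const_nhds.div_atTop (tendsto_sub_const_atTop c)

lemma tendsto_N_div (c : ℝ) : Tendsto (fun N : ℝ => N/(N-c)) atTop (𝓝 1) := by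
  have h0 : Tendsto (fun N : ℝ => c/(N-c)) atTop (𝓝 0) :=
    tendsto_const_nhds.div_atTop (tendsto_sub_const_atTop c)
  have h1 : Tendsto (fun N : ℝ => 1 + c/(N-c)) atTop (𝓝 1) := by
    simpa using (tendsto_const_nhds (x := (1:ℝ))).add h0
  apply h1.congr'
  filter_upwards [eventually_gt_atTop c] with N hN
  have : N - c ≠ 0 := by linarith
  field_simp
  ring

end chunk7

section final
variable {p : ℝ}

noncomputable def Lfun (p : ℝ) : ℝ → ℝ := fun N =>
  N^2*(((p/2)/((N-1)/2))^2 + (1/((N-p-1)/2 - 1/2) - 1/((N-1)/2 - 1/2))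
    - (1/3)*(1/((N-p-1)/2 - 1)^3))

noncomputable def Ufun (p : ℝ) : ℝ → ℝ := fun N =>
  N^2*(((p/2)/((N-p-1)/2 - 1))^2 + (1/((N-p-1)/2 - 1/2) - 1/((N-1)/2 - 1/2))
    + (1/3)*(1/((N-1)/2 - 1)^3))

set_option maxHeartbeats 1000000 in
lemma tendsto_Lfun (hp : 0 < p) : Tendsto (Lfun p) atTop (𝓝 (p*(p+2))) := by
  have T1 : Tendsto (fun N : ℝ => p^2*(N/(N-1))^2) atTop (𝓝 (p^2*1^2)) :=
    (((tendsto_N_div 1).pow 2)).const_mul _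
  have T2 : Tendsto (fun N : ℝ => 2*p*((N/(N-(p+2)))*(N/(N-2)))) atTop (𝓝 (2*p*(1*1))) :=
    (((tendsto_N_div (p+2)).mul (tendsto_N_div 2))).const_mul _
  have T3 : Tendsto (fun N : ℝ => (8/3)*((N/(N-(p+3)))^2*(1/(N-(p+3))))) atTop
      (𝓝 ((8/3)*(1^2*0))) :=
    ((((tendsto_N_div (p+3)).pow 2)).mul (tendsto_inv_shift (p+3))).const_mul _
  have hcomb := (T1.add T2).sub T3
  have hval : p^2*1^2 + 2*p*(1*1) - (8/3)*(1^2*0) = p*(p+2) := by ring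
  rw [hval] at hcomb
  apply hcomb.congr'
  filter_upwards [eventually_gt_atTop (p+4), eventually_gt_atTop 4] with N h1 h2
  have e1 : N - 1 ≠ 0 := by linarith
  have e2 : N - 2 ≠ 0 := by linarith
  have e3 : N - (p+2) ≠ 0 := by linarith
  have e4 : N - (p+3) ≠ 0 := by linarith
  have A : (p/2)/((N-1)/2) = p*(1/(N-1)) := by field_simp
  have M : 1/((N-p-1)/2 - 1/2) - 1/((N-1)/2 - 1/2) = 2*p*((1/(N-(p+2)))*(1/(N-2))) := by
    rw [show (N-p-1)/2 - 1/2 = (N-(p+2))/2 by ring, show (N-1)/2 - 1/2 = (N-2)/2 by ring]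
    field_simp
    ring
  have Dq : 1/((N-p-1)/2 - 1)^3 = 8*(1/(N-(p+3))^3) := by
    rw [show (N-p-1)/2 - 1 = (N-(p+3))/2 by ring, div_pow, one_div_div]
    rw [mul_one_div]
    norm_num
  show _ = Lfun p N
  rw [Lfun, A, M, Dq]
  field_simp

set_option maxHeartbeats 1000000 in
lemma tendsto_Ufun (hp : 0 < p) : Tendsto (Ufun p) atTop (𝓝 (p*(p+2))) := by
  have T1 : Tendsto (fun N : ℝ => p^2*(N/(N-(p+3)))^2) atTop (𝓝 (p^2*1^2)) :=
    (((tendsto_N_div (p+3)).pow 2)).const_mul _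
  have T2 : Tendsto (fun N : ℝ => 2*p*((N/(N-(p+2)))*(N/(N-2)))) atTop (𝓝 (2*p*(1*1))) :=
    (((tendsto_N_div (p+2)).mul (tendsto_N_div 2))).const_mul _
  have T3 : Tendsto (fun N : ℝ => (8/3)*((N/(N-3))^2*(1/(N-3)))) atTop
      (𝓝 ((8/3)*(1^2*0))) :=
    ((((tendsto_N_div 3).pow 2)).mul (tendsto_inv_shift 3)).const_mul _
  have hcomb := (T1.add T2).add T3
  have hval : p^2*1^2 + 2*p*(1*1) + (8/3)*(1^2*0) = p*(p+2) := by ring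
  rw [hval] at hcomb
  apply hcomb.congr'
  filter_upwards [eventually_gt_atTop (p+4), eventually_gt_atTop 4] with N h1 h2
  have e1 : N - 3 ≠ 0 := by linarith
  have e2 : N - 2 ≠ 0 := by linarith
  have e3 : N - (p+2) ≠ 0 := by linarith
  have e4 : N - (p+3) ≠ 0 := by linarith
  have A : (p/2)/((N-p-1)/2 - 1) = p*(1/(N-(p+3))) := by
    rw [show (N-p-1)/2 - 1 = (N-(p+3))/2 by ring]
    field_simp
  have M : 1/((N-p-1)/2 - 1/2) - 1/((N-1)/2 - 1/2) = 2*p*((1/(N-(p+2)))*(1/(N-2))) := by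
    rw [show (N-p-1)/2 - 1/2 = (N-(p+2))/2 by ring, show (N-1)/2 - 1/2 = (N-2)/2 by ring]
    field_simp
    ring
  have Dq : 1/((N-1)/2 - 1)^3 = 8*(1/(N-3)^3) := by
    rw [show (N-1)/2 - 1 = (N-3)/2 by ring, div_pow, one_div_div]
    rw [mul_one_div]
    norm_num
  show _ = Ufun p N
  rw [Ufun, A, M, Dq]
  field_simp

end final

theorem stmt_12 (p : ℝ) (hp : 0 < p) :
    Tendsto
      (fun N : ℝ =>
        N ^ 2 *
          ((digamma ((N - 1) / 2) - digamma ((N - p - 1) / 2)) ^ 2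
            - (trigamma ((N - 1) / 2) - trigamma ((N - p - 1) / 2))))
      atTop (nhds (p * (p + 2))) := by
  refine tendsto_of_tendsto_of_tendsto_of_le_of_le' (tendsto_Lfun hp) (tendsto_Ufun hp) ?_ ?_
  · filter_upwards [eventually_gt_atTop (p+4), eventually_gt_atTop 4] with N h1 h2
    set a := (N-1)/2 with ha
    set b := (N-p-1)/2 with hbdef
    have hb1 : 1 < b := by rw [hbdef]; linarith
    have ha1 : 1 < a := by rw [ha]; linarith
    have hb0 : 0 < b := by linarith
    have hab : b < a := by rw [ha, hbdef]; linarith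
    have habd : a - b = p/2 := by rw [ha, hbdef]; ring
    have hD_ge := digamma_diff_ge hb0 hab
    have hD_le := digamma_diff_le hb1 hab
    have hTa_le := triAux_le (by linarith : 1/2 < a)
    have hTb_ge := triAux_ge hb1
    have htri : trigamma a - trigamma b = -(triAux b - triAux a) := by
      rw [trigamma_eq (by linarith : (0:ℝ) < a), trigamma_eq hb0]; ring
    have hD2 : ((a-b)/a)^2 ≤ (digamma a - digamma b)^2 := by
      exact pow_le_pow_left₀ (div_nonneg (by linarith) (by linarith)) hD_ge 2
    have hS : (1/(b - 1/2) - (1/3)*(1/(b-1)^3)) - 1/(a - 1/2) ≤ triAux b - triAux a := by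
      have := sub_le_sub hTb_ge hTa_le
      linarith
    rw [show Lfun p N = N^2*(((a-b)/a)^2 + (1/(b - 1/2) - 1/(a - 1/2))
        - (1/3)*(1/(b-1)^3)) by rw [Lfun, habd]]
    rw [htri]
    apply mul_le_mul_of_nonneg_left _ (by positivity : (0:ℝ) ≤ N^2)
    linarith
  · filter_upwards [eventually_gt_atTop (p+4), eventually_gt_atTop 4] with N h1 h2
    set a := (N-1)/2 with ha
    set b := (N-p-1)/2 with hbdef
    have hb1 : 1 < b := by rw [hbdef]; linarith
    have ha1 : 1 < a := by rw [ha]; linarith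
    have hb0 : 0 < b := by linarith
    have hab : b < a := by rw [ha, hbdef]; linarith
    have habd : a - b = p/2 := by rw [ha, hbdef]; ring
    have hD_ge := digamma_diff_ge hb0 hab
    have hD_le := digamma_diff_le hb1 hab
    have hTb_le := triAux_le (by linarith : 1/2 < b)
    have hTa_ge := triAux_ge ha1
    have htri : trigamma a - trigamma b = -(triAux b - triAux a) := by
      rw [trigamma_eq (by linarith : (0:ℝ) < a), trigamma_eq hb0]; ring
    have hD2 : (digamma a - digamma b)^2 ≤ ((a-b)/(b-1))^2 := by
      have h0 : (0:ℝ) ≤ (a-b)/a := div_nonneg (by linarith) (by linarith)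
      exact pow_le_pow_left₀ (le_trans h0 hD_ge) hD_le 2
    have hS : triAux b - triAux a ≤ 1/(b - 1/2) - 1/(a - 1/2) + (1/3)*(1/(a-1)^3) := by
      have := sub_le_sub hTb_le hTa_ge
      linarith
    rw [show Ufun p N = N^2*(((a-b)/(b-1))^2 + (1/(b - 1/2) - 1/(a - 1/2))
        + (1/3)*(1/(a-1)^3)) by rw [Ufun, habd]]
    rw [htri]
    apply mul_le_mul_of_nonneg_left _ (by positivity : (0:ℝ) ≤ N^2)
    linarith
end
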